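/- arXiv:2005.06516 — 5 statements merged into one kernel-verified Lean document; each statement's English description precedes it below -/
import Mathlib

section
/- Assume the nondegeneracy condition A(t) ≥ c* t² I for |t| ≤ t⁰ (c* > 0). Suppose that in the analytic eigenvalue expansions λ_l(t) = γ_l t² + μ_l t³ + ν_l t⁴ + … (l = 1,…,n) of A(t) one has μ_l = 0 for all l (i.e., N₀ = 0), while ν_j ≠ 0 for at least one j (i.e., 𝒩^{(q)} ≠ 0 for some q). Let τ ≠ 0 and 0 ≤ s < 2. Then there does not exist a constant C(τ) > 0 such that ‖e^{-iτε^{-2}A(t)}P − e^{-iτε^{-2}t²SP}P‖ · ε^{s}(t²+ε²)^{-s/2} ≤ C(τ)ε for all sufficiently small |t| and ε > 0. -/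
/-!
Birman–Suslina abstract operator-theoretic scheme.

`BSScheme` encodes: complex separable Hilbert spaces `H`, `Hs`; a densely defined
closed operator `X₀ : H → Hs`; a bounded operator `X₁`; the family
`X(t) = X₀ + t X₁` and the selfadjoint nonnegative operator family
`A(t) = X(t)* X(t)` (encoded through its quadratic form); the kernel
`𝔑 = Ker A(0) = Ker X₀` of finite dimension `n` with `n ≤ dim Ker X₀*`;
the orthogonal projections `P`, `P*` onto `𝔑` and `𝔑* = Ker X₀* = (Ran X₀)ᗮ`;
the spectral gap data `0 < 8δ < d⁰` (the point `0` is isolated in the spectrum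
of `A₀`); the operator `Z` (solving the weak problem `X₀*(X₀ ψ + X₁ ω) = 0`);
and the unitary group `E t τ = e^{-iτ A(t)}` generated by `A(t)`.
-/

noncomputable section

open ContinuousLinearMap

structure BSScheme where
  H : Type
  Hs : Type
  [instH₁ : NormedAddCommGroup H]
  [instH₂ : InnerProductSpace ℂ H]
  [instH₃ : CompleteSpace H]
  [instHs₁ : NormedAddCommGroup Hs]
  [instHs₂ : InnerProductSpace ℂ Hs]
  [instHs₃ : CompleteSpace Hs]
  /-- densely defined closed operator `X₀` -/
  X₀ : H →ₗ.[ℂ] Hs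
  X₀_dense : Dense (X₀.domain : Set H)
  X₀_closed : IsClosed (X₀.graph : Set (H × Hs))
  /-- bounded operator `X₁` -/
  X₁ : H →L[ℂ] Hs
  n : ℕ
  n_pos : 0 < n
  /-- the kernel `𝔑 = Ker X₀ = Ker A(0)` -/
  ker : Submodule ℂ H
  ker_def : ∀ u : H, u ∈ ker ↔ ∃ hu : u ∈ X₀.domain, X₀ ⟨u, hu⟩ = 0
  ker_findim : FiniteDimensional ℂ ker
  ker_rank : Module.finrank ℂ ker = n
  /-- the kernel `𝔑* = Ker X₀* = (Ran X₀)ᗮ` -/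
  kerStar : Submodule ℂ Hs
  kerStar_def : ∀ v : Hs, v ∈ kerStar ↔ ∀ u : X₀.domain, (inner ℂ (X₀ u) v : ℂ) = 0
  rank_le : (n : Cardinal) ≤ Module.rank ℂ kerStar
  /-- the orthogonal projection onto `𝔑` -/
  P : H →L[ℂ] H
  P_mem : ∀ u, P u ∈ ker
  P_fix : ∀ u ∈ ker, P u = u
  P_sa : IsSelfAdjoint P
  /-- the orthogonal projection onto `𝔑*` -/
  Pstar : Hs →L[ℂ] Hs
  Pstar_mem : ∀ v, Pstar v ∈ kerStar
  Pstar_fix : ∀ v ∈ kerStar, Pstar v = v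
  Pstar_sa : IsSelfAdjoint Pstar
  /-- `d⁰` is the distance from the isolated spectral point `0` to the rest of the
  spectrum of `A₀`: the form `‖X₀ u‖²` is `≥ d⁰‖u‖²` on `𝔑ᗮ` -/
  d0 : ℝ
  δ : ℝ
  δ_pos : 0 < δ
  gap : ∀ u : X₀.domain, (u : H) ∈ kerᗮ → d0 * ‖(u : H)‖ ^ 2 ≤ ‖X₀ u‖ ^ 2
  δ_small : 8 * δ < d0
  /-- the selfadjoint operator family `A(t) = X(t)* X(t)` generated by the closed
  quadratic form `‖X(t)u‖²`, `u ∈ Dom X₀` -/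
  A : ℝ → (H →ₗ.[ℂ] H)
  A_dense : ∀ t, Dense ((A t).domain : Set H)
  A_dom : ∀ t, (A t).domain ≤ X₀.domain
  A_form : ∀ (t : ℝ) (u : (A t).domain) (v : X₀.domain),
    (inner ℂ ((A t) u) (v : H) : ℂ) =
      inner ℂ (X₀ ⟨(u : H), A_dom t u.2⟩ + t • X₁ (u : H)) (X₀ v + t • X₁ (v : H))
  /-- the operator `Z`: `Z u = ψ(Pu)` where `ψ ∈ Dom X₀ ∩ 𝔑ᗮ` is the weak solution
  of `X₀*(X₀ ψ + X₁ ω) = 0`, `ω = Pu` -/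
  Z : H →L[ℂ] H
  Z_proj : ∀ u : H, Z (P u) = Z u
  Z_dom : ∀ u : H, Z u ∈ X₀.domain
  Z_perp : ∀ u : H, Z u ∈ kerᗮ
  Z_sol : ∀ (u : H) (v : X₀.domain),
    (inner ℂ (X₀ ⟨Z u, Z_dom u⟩ + X₁ (P u)) (X₀ v) : ℂ) = 0
  /-- `E t τ = e^{-iτ A(t)}`: the unitary group generated by `A(t)` -/
  E : ℝ → ℝ → (H →L[ℂ] H)
  E_zero : ∀ t, E t 0 = ContinuousLinearMap.id ℂ H
  E_group : ∀ t τ σ, E t (τ + σ) = (E t τ).comp (E t σ)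
  E_isometry : ∀ t τ u, ‖E t τ u‖ = ‖u‖
  E_gen : ∀ (t τ : ℝ) (u : (A t).domain),
    HasDerivAt (fun s : ℝ => E t s (u : H))
      (-(Complex.I • (E t τ ((A t) u)))) τ

attribute [instance] BSScheme.instH₁ BSScheme.instH₂ BSScheme.instH₃
attribute [instance] BSScheme.instHs₁ BSScheme.instHs₂ BSScheme.instHs₃

namespace BSScheme

variable (S : BSScheme)

/-- `t⁰ = δ^{1/2} ‖X₁‖⁻¹` -/
def t0 : ℝ := Real.sqrt S.δ / ‖S.X₁‖

/-- `R P = P* X₁ P` -/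
def RP : S.H →L[ℂ] S.Hs := S.Pstar ∘L S.X₁ ∘L S.P

/-- the spectral germ `S = P X₁* P* X₁ |_𝔑`, extended by zero to `H`
(the operator `S P`) -/
def germ : S.H →L[ℂ] S.H :=
  S.P ∘L (ContinuousLinearMap.adjoint S.X₁) ∘L S.Pstar ∘L S.X₁ ∘L S.P

/-- the operator `N = Z* X₁* R P + (R P)* X₁ Z` -/
def Nop : S.H →L[ℂ] S.H :=
  (ContinuousLinearMap.adjoint (S.X₁ ∘L S.Z)) ∘L S.RP
    + (ContinuousLinearMap.adjoint S.RP) ∘L (S.X₁ ∘L S.Z)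

end BSScheme

/-!  Analytic branches of eigenvalues and eigenvectors of `A(t)` near `t = 0`:
for `|t| ≤ t_*` the eigenvalues of `A(t)` in `[0, δ]` are
`λ_l(t) = γ_l t² + μ_l t³ + ν_l t⁴ + …` with analytic orthonormal eigenvectors
`φ_l(t) = ω_l + O(t)`, where `{ω_l}` is an orthonormal basis of `𝔑`
consisting of eigenvectors of the germ: `S ω_l = γ_l ω_l`. -/
structure SpecData (S : BSScheme) where
  tstar : ℝ
  tstar_pos : 0 < tstar
  lam : Fin S.n → ℝ → ℝ
  φ : Fin S.n → ℝ → S.H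
  ω : Fin S.n → S.H
  γ : Fin S.n → ℝ
  μ : Fin S.n → ℝ
  ν : Fin S.n → ℝ
  ω_mem : ∀ l, ω l ∈ S.ker
  ω_orthonormal : Orthonormal ℂ ω
  germ_eig : ∀ l, S.germ (ω l) = (γ l : ℂ) • ω l
  φ_orthonormal : ∀ t : ℝ, |t| ≤ tstar → Orthonormal ℂ (fun l => φ l t)
  φ_eig : ∀ (l) (t : ℝ), |t| ≤ tstar →
    ∃ hd : φ l t ∈ (S.A t).domain, (S.A t) ⟨φ l t, hd⟩ = (lam l t : ℂ) • φ l t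
  lam_nonneg : ∀ l t, |t| ≤ tstar → 0 ≤ lam l t
  lam_le : ∀ l t, |t| ≤ tstar → lam l t ≤ S.δ
  φ_expansion : ∃ c : ℝ, ∀ (l) (t : ℝ), |t| ≤ tstar → ‖φ l t - ω l‖ ≤ c * |t|
  lam_expansion : ∃ c : ℝ, ∀ (l) (t : ℝ), |t| ≤ tstar →
    |lam l t - (γ l * t ^ 2 + μ l * t ^ 3 + ν l * t ^ 4)| ≤ c * |t| ^ 5

namespace SpecData

variable {S : BSScheme} (SD : SpecData S)

/-- the rank-one projection `( ·, x) x` -/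
noncomputable def rkOne (x : S.H) : S.H →L[ℂ] S.H := (innerSL ℂ x).smulRight x

/-- the orthogonal projection onto the eigenspace of the germ `S`
corresponding to the eigenvalue `a` (zero if `a` is not an eigenvalue) -/
noncomputable def eigProj (a : ℝ) : S.H →L[ℂ] S.H :=
  letI := Classical.decEq ℝ
  ∑ l : Fin S.n, if SD.γ l = a then SpecData.rkOne (SD.ω l) else 0

/-- the operator `N₀ = Σ_l μ_l ( ·, ω_l) ω_l` (the diagonal part of `N`) -/
noncomputable def N0op : S.H →L[ℂ] S.H :=
  ∑ l : Fin S.n, (SD.μ l : ℂ) • SpecData.rkOne (SD.ω l)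

end SpecData


lemma aux_abs_exp_sub_sq (θ₁ θ₂ : ℝ) :
    ‖Complex.exp (-(Complex.I * θ₁)) - Complex.exp (-(Complex.I * θ₂))‖ ^ 2
      = 2 - 2 * Real.cos (θ₁ - θ₂) := by
  have h1 : ∀ θ : ℝ, Complex.exp (-(Complex.I * θ))
      = (Real.cos θ : ℂ) - (Real.sin θ : ℂ) * Complex.I := by
    intro θ
    rw [show -(Complex.I * (θ : ℂ)) = ((-θ : ℝ) : ℂ) * Complex.I by push_cast; ring,
      Complex.exp_mul_I]
    push_cast
    simp [Complex.cos_neg, Complex.sin_neg]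
    ring
  rw [h1, h1, Complex.sq_norm]
  have h2 : ((Real.cos θ₁ : ℂ) - (Real.sin θ₁ : ℂ) * Complex.I)
      - ((Real.cos θ₂ : ℂ) - (Real.sin θ₂ : ℂ) * Complex.I)
      = ((Real.cos θ₁ - Real.cos θ₂ : ℝ) : ℂ)
        + ((Real.sin θ₂ - Real.sin θ₁ : ℝ) : ℂ) * Complex.I := by
    push_cast; ring
  rw [h2, Complex.normSq_add_mul_I, Real.cos_sub]
  nlinarith [Real.sin_sq_add_cos_sq θ₁, Real.sin_sq_add_cos_sq θ₂]

lemma aux_abs_exp_sub (θ₁ θ₂ : ℝ) (h : Real.cos (θ₁ - θ₂) ≤ 0) :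
    Real.sqrt 2 ≤
      ‖Complex.exp (-(Complex.I * θ₁)) - Complex.exp (-(Complex.I * θ₂))‖ := by
  have h2 : (2 : ℝ) ≤ ‖Complex.exp (-(Complex.I * θ₁))
      - Complex.exp (-(Complex.I * θ₂))‖ ^ 2 := by
    rw [aux_abs_exp_sub_sq]; linarith
  calc Real.sqrt 2 ≤ Real.sqrt (‖Complex.exp (-(Complex.I * θ₁))
        - Complex.exp (-(Complex.I * θ₂))‖ ^ 2) := Real.sqrt_le_sqrt h2
    _ = _ := by rw [Real.sqrt_sq (norm_nonneg _)]

lemma aux_exp_clm_eigen {H : Type} [NormedAddCommGroup H] [NormedSpace ℂ H] [CompleteSpace H]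
    (T : H →L[ℂ] H) (x : H) (c γc : ℂ) (h : T x = γc • x) :
    NormedSpace.exp (c • T) x = Complex.exp (c * γc) • x := by
  have hpow : ∀ k : ℕ, ((c • T) ^ k) x = (c * γc) ^ k • x := by
    intro k
    induction k with
    | zero => simp
    | succ k ih =>
      rw [pow_succ, ContinuousLinearMap.mul_apply, ContinuousLinearMap.smul_apply, h,
        smul_smul, map_smul, ih, smul_smul, ← pow_succ']
  have hs : Summable fun n : ℕ => ((Nat.factorial n : ℂ))⁻¹ • (c • T) ^ n :=
    NormedSpace.expSeries_summable' (𝕂 := ℂ) (c • T)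
  have hs2 : Summable fun n : ℕ => ((Nat.factorial n : ℂ))⁻¹ • (c * γc) ^ n :=
    NormedSpace.expSeries_summable' (𝕂 := ℂ) (c * γc)
  have := (ContinuousLinearMap.apply ℂ H x).map_tsum hs
  rw [NormedSpace.exp_eq_tsum (𝕂 := ℂ)]
  calc (∑' n : ℕ, ((Nat.factorial n : ℂ))⁻¹ • (c • T) ^ n) x
      = ∑' n : ℕ, (((Nat.factorial n : ℂ))⁻¹ • (c • T) ^ n) x := this
    _ = ∑' n : ℕ, (((Nat.factorial n : ℂ))⁻¹ * (c * γc) ^ n) • x := by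
        congr 1; funext n
        rw [ContinuousLinearMap.smul_apply, hpow, smul_smul]
    _ = (∑' n : ℕ, ((Nat.factorial n : ℂ))⁻¹ * (c * γc) ^ n) • x := Summable.tsum_smul_const (by simpa using hs2) x
    _ = Complex.exp (c * γc) • x := by
        rw [Complex.exp_eq_exp_ℂ, NormedSpace.exp_eq_tsum (𝕂 := ℂ)]
        norm_num

lemma aux_E_eigen (S : BSScheme) (t : ℝ) (φ : S.H) (lam : ℝ)
    (hd : φ ∈ (S.A t).domain) (heig : (S.A t) ⟨φ, hd⟩ = (lam : ℂ) • φ) (σ : ℝ) :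
    S.E t σ φ = Complex.exp (-(Complex.I * lam * σ)) • φ := by
  set c : ℂ := Complex.I * lam with hc
  have key : ∀ σ : ℝ, HasDerivAt (fun s : ℝ => Complex.exp (c * s) • S.E t s φ) 0 σ := by
    intro σ
    have hb : HasDerivAt (fun s : ℝ => (c * (s : ℂ))) c σ := by
      simpa using (Complex.ofRealCLM.hasDerivAt (x := σ)).const_mul c
    have h1 : HasDerivAt (fun s : ℝ => Complex.exp (c * s)) (Complex.exp (c * σ) * c) σ :=
      hb.cexp
    have h2 := S.E_gen t σ ⟨φ, hd⟩
    rw [heig] at h2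
    have h2' : HasDerivAt (fun s : ℝ => S.E t s φ) ((-c) • S.E t σ φ) σ := by
      have : -(Complex.I • S.E t σ ((lam : ℂ) • φ)) = (-c) • S.E t σ φ := by
        rw [map_smul, smul_smul, hc]; module
      rw [← this]; exact h2
    have h3 := h1.smul h2'
    have h4 : Complex.exp (c * σ) • (-c) • S.E t σ φ
        + (Complex.exp (c * σ) * c) • S.E t σ φ = 0 := by
      rw [smul_smul]; module
    rw [h4] at h3
    exact h3
  have hdiff : Differentiable ℝ (fun s : ℝ => Complex.exp (c * s) • S.E t s φ) :=
    fun x => (key x).differentiableAt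
  have hconst := is_const_of_deriv_eq_zero hdiff (fun x => (key x).deriv) σ 0
  simp only [Complex.ofReal_zero, mul_zero, Complex.exp_zero, one_smul, S.E_zero] at hconst
  have hc0 : Complex.exp (c * σ) • S.E t σ φ = φ :=
    hconst.trans (ContinuousLinearMap.id_apply φ)
  have h5 : S.E t σ φ = (Complex.exp (c * σ))⁻¹ • φ :=
    ((inv_smul_eq_iff₀ (Complex.exp_ne_zero _)).mpr hc0.symm).symm
  rw [h5, ← Complex.exp_neg]

set_option maxHeartbeats 1000000 in
/-- Assume the nondegeneracy condition `A(t) ≥ c⁎ t² I` for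
`|t| ≤ t⁰`. Suppose that in the eigenvalue expansions
`λ_l(t) = γ_l t² + μ_l t³ + ν_l t⁴ + …` one has `μ_l = 0` for all `l`
(i.e. `N₀ = 0`) while `ν_j ≠ 0` for some `j` (i.e. `𝒩^{(q)} ≠ 0` for some `q`).
Let `τ ≠ 0` and `0 ≤ s < 2`. Then there is no constant `C(τ) > 0` such that
`‖e^{-iτε⁻²A(t)}P − e^{-iτε⁻²t²SP}P‖ εˢ(t²+ε²)^{-s/2} ≤ C(τ) ε` for all
sufficiently small `|t|` and `ε`. -/
theorem exp_approx_smoothing_sharp (S : BSScheme) (SD : SpecData S)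
    (cstar : ℝ) (hcstar : 0 < cstar)
    (hnondeg : ∀ t : ℝ, |t| ≤ S.t0 → ∀ u : (S.A t).domain,
      cstar * t ^ 2 * ‖(u : S.H)‖ ^ 2 ≤ (inner ℂ ((S.A t) u) (u : S.H) : ℂ).re)
    (hμ : ∀ l, SD.μ l = 0) (hν : ∃ j, SD.ν j ≠ 0)
    (τ : ℝ) (hτ : τ ≠ 0) (s : ℝ) (hs0 : 0 ≤ s) (hs2 : s < 2) :
    ¬ ∃ C : ℝ, 0 < C ∧ ∃ t₁ > (0 : ℝ), ∃ ε₁ > (0 : ℝ), ∀ t ε : ℝ,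
        |t| ≤ t₁ → 0 < ε → ε ≤ ε₁ →
        ‖(S.E t (τ / ε ^ 2)
            - NormedSpace.exp
                (((-Complex.I) * ((τ / ε ^ 2 * t ^ 2 : ℝ) : ℂ)) • S.germ))
            ∘L S.P‖ * (ε ^ s / (t ^ 2 + ε ^ 2) ^ (s / 2)) ≤ C * ε := by
  rintro ⟨C, hC, t₁, ht₁, ε₁, hε₁, hbound⟩
  obtain ⟨j, hj⟩ := hν
  obtain ⟨cφ₀, hcφ⟩ := SD.φ_expansion
  obtain ⟨cl₀, hcl⟩ := SD.lam_expansion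
  set cφ : ℝ := max cφ₀ 1 with hcφdef
  set cl : ℝ := max cl₀ 1 with hcldef
  have hcφ1 : (1:ℝ) ≤ cφ := le_max_right _ _
  have hcl1 : (1:ℝ) ≤ cl := le_max_right _ _
  have hcφ0 : (0:ℝ) < cφ := zero_lt_one.trans_le hcφ1
  have hcl0 : (0:ℝ) < cl := zero_lt_one.trans_le hcl1
  set p : ℝ := τ * SD.ν j with hpdef
  have hp : p ≠ 0 := mul_ne_zero hτ hj
  have hpabs : 0 < |p| := abs_pos.mpr hp
  have hπ := Real.pi_pos
  set a : ℝ := Real.sqrt (|p| / Real.pi) with hadef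
  have ha : 0 < a := Real.sqrt_pos.mpr (div_pos hpabs hπ)
  have ha2 : a ^ 2 = |p| / Real.pi := Real.sq_sqrt (le_of_lt (div_pos hpabs hπ))
  set D : ℝ := a ^ s / (2:ℝ) ^ (s/2) with hDdef
  have h2s : (0:ℝ) < (2:ℝ) ^ (s/2) := Real.rpow_pos_of_pos two_pos _
  have hD : 0 < D := div_pos (Real.rpow_pos_of_pos ha s) h2s
  have h2s' : (0:ℝ) < 2 - s := by linarith
  set tb : ℝ := (D / (2 * C * a)) ^ (2 - s)⁻¹ with htbdef
  have htb : 0 < tb := Real.rpow_pos_of_pos (div_pos hD (by positivity)) _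
  obtain ⟨t, ht, ht_t1, ht_ts, ht_1, ht_e, ht_ν, ht_φ, ht_a, ht_b⟩ :
      ∃ t : ℝ, 0 < t ∧ t ≤ t₁ ∧ t ≤ SD.tstar ∧ t ≤ 1 ∧ t ≤ ε₁ / a ∧
        t ≤ |SD.ν j| / (2 * cl) ∧ t ≤ 1 / (8 * cφ) ∧ t ≤ a⁻¹ ∧ t ≤ tb := by
    refine ⟨min (min (min t₁ SD.tstar) (min 1 (ε₁ / a)))
        (min (min (|SD.ν j| / (2 * cl)) (1 / (8 * cφ))) (min a⁻¹ tb)), ?_, ?_, ?_, ?_, ?_,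
        ?_, ?_, ?_, ?_⟩
    · refine lt_min (lt_min (lt_min ht₁ SD.tstar_pos) (lt_min one_pos (div_pos hε₁ ha)))
        (lt_min (lt_min (div_pos (abs_pos.mpr hj) (by positivity)) (by positivity))
          (lt_min (inv_pos.mpr ha) htb))
    · exact (min_le_left _ _).trans ((min_le_left _ _).trans (min_le_left _ _))
    · exact (min_le_left _ _).trans ((min_le_left _ _).trans (min_le_right _ _))
    · exact (min_le_left _ _).trans ((min_le_right _ _).trans (min_le_left _ _))
    · exact (min_le_left _ _).trans ((min_le_right _ _).trans (min_le_right _ _))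
    · exact (min_le_right _ _).trans ((min_le_left _ _).trans (min_le_left _ _))
    · exact (min_le_right _ _).trans ((min_le_left _ _).trans (min_le_right _ _))
    · exact (min_le_right _ _).trans ((min_le_right _ _).trans (min_le_left _ _))
    · exact (min_le_right _ _).trans ((min_le_right _ _).trans (min_le_right _ _))
  have habs_t : |t| = t := abs_of_pos ht
  set ε : ℝ := a * t ^ 2 with hεdef
  have hε : 0 < ε := by positivity
  have hεε₁ : ε ≤ ε₁ := by
    have h1 : t ^ 2 ≤ t := by
      simpa [pow_two, mul_one] using mul_le_mul_of_nonneg_left ht_1 ht.le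
    have h2 : a * (ε₁ / a) = ε₁ := by field_simp
    have h3 : a * t ^ 2 ≤ a * t := mul_le_mul_of_nonneg_left h1 ha.le
    have h4 : a * t ≤ a * (ε₁ / a) := mul_le_mul_of_nonneg_left ht_e ha.le
    rw [hεdef]
    linarith only [h2, h3, h4]
  have hkey := hbound t ε (by rw [habs_t]; exact ht_t1) hε hεε₁
  set σ : ℝ := τ / ε ^ 2 with hσdef
  set ω : S.H := SD.ω j with hωdef
  have hω1 : ‖ω‖ = 1 := SD.ω_orthonormal.1 j
  set φt : S.H := SD.φ j t with hφdef
  have hts : |t| ≤ SD.tstar := by rw [habs_t]; exact ht_ts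
  obtain ⟨hd, heig⟩ := SD.φ_eig j t hts
  set lamt : ℝ := SD.lam j t with hlamdef
  set θ₁ : ℝ := lamt * σ with hθ₁def
  set θ₂ : ℝ := σ * t ^ 2 * SD.γ j with hθ₂def
  have hE' : S.E t σ φt = Complex.exp (-(Complex.I * θ₁)) • φt := by
    rw [aux_E_eigen S t φt lamt hd heig σ]
    congr 2
    simp only [hθ₁def]
    push_cast
    ring
  have hexp' : NormedSpace.exp (((-Complex.I) * ((σ * t ^ 2 : ℝ) : ℂ)) • S.germ) ω
      = Complex.exp (-(Complex.I * θ₂)) • ω := by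
    rw [aux_exp_clm_eigen S.germ ω ((-Complex.I) * ((σ * t ^ 2 : ℝ) : ℂ)) ((SD.γ j : ℝ) : ℂ)
      (SD.germ_eig j)]
    congr 2
    simp only [hθ₂def]
    push_cast
    ring
  have hPω : S.P ω = ω := S.P_fix ω (SD.ω_mem j)
  set T := (S.E t σ - NormedSpace.exp (((-Complex.I) * ((σ * t ^ 2 : ℝ) : ℂ)) • S.germ))
      ∘L S.P with hTdef
  have hTω : T ω = (Complex.exp (-(Complex.I * θ₁)) - Complex.exp (-(Complex.I * θ₂))) • ω
      + Complex.exp (-(Complex.I * θ₁)) • (φt - ω) + S.E t σ (ω - φt) := by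
    have h1 : T ω = S.E t σ ω
        - NormedSpace.exp (((-Complex.I) * ((σ * t ^ 2 : ℝ) : ℂ)) • S.germ) ω := by
      rw [hTdef, ContinuousLinearMap.comp_apply, hPω, ContinuousLinearMap.sub_apply]
    have h2 : S.E t σ ω = S.E t σ φt + S.E t σ (ω - φt) := by
      rw [← map_add]
      congr 1
      abel
    rw [h1, h2, hE', hexp']
    module
  have habs1 : ‖Complex.exp (-(Complex.I * θ₁))‖ = 1 := by
    rw [Complex.norm_exp]
    simp
  have hφω : ‖φt - ω‖ ≤ cφ * t := by
    have h1 := hcφ j t hts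
    rw [habs_t] at h1
    have h2 : cφ₀ * t ≤ cφ * t := mul_le_mul_of_nonneg_right (le_max_left _ _) ht.le
    exact h1.trans h2
  -- the phase difference
  have hε2' : ε ^ 2 = (|p| / Real.pi) * t ^ 4 := by
    rw [hεdef, ← ha2]; ring
  set r : ℝ := lamt - SD.γ j * t ^ 2 - SD.ν j * t ^ 4 with hrdef
  have hr : |r| ≤ cl * t ^ 5 := by
    have h1 := hcl j t hts
    rw [hμ j, habs_t] at h1
    have h2 : r = lamt - (SD.γ j * t ^ 2 + 0 * t ^ 3 + SD.ν j * t ^ 4) := by rw [hrdef]; ring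
    rw [h2]
    refine h1.trans ?_
    exact mul_le_mul_of_nonneg_right (le_max_left _ _) (by positivity)
  set err : ℝ := τ * r / ε ^ 2 with herrdef
  have hθdiff : θ₁ - θ₂ = p * Real.pi / |p| + err := by
    rw [hθ₁def, hθ₂def, herrdef, hσdef, hrdef, hpdef, hε2']
    have hπ0 : Real.pi ≠ 0 := hπ.ne'
    have ht0 : t ≠ 0 := ht.ne'
    have hp0 : |p| ≠ 0 := hpabs.ne'
    field_simp
    ring
  have herr : |err| ≤ Real.pi / 2 := by
    have h1 : |err| = |τ| * |r| / ε ^ 2 := by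
      rw [herrdef, abs_div, abs_mul, abs_of_pos (pow_pos hε 2)]
    have h2 : |τ| * |r| / ε ^ 2 ≤ |τ| * (cl * t ^ 5) / ε ^ 2 := by gcongr
    have h3 : |τ| * (cl * t ^ 5) / ε ^ 2 = Real.pi * cl * t / |SD.ν j| := by
      rw [hε2', hpdef, abs_mul]
      have ht0 : t ≠ 0 := ht.ne'
      have hτ0 : |τ| ≠ 0 := abs_ne_zero.mpr hτ
      have hν0 : |SD.ν j| ≠ 0 := abs_ne_zero.mpr hj
      field_simp
    have hν0 : (0:ℝ) < |SD.ν j| := abs_pos.mpr hj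
    have hcl' : cl ≠ 0 := hcl0.ne'
    have h4 : Real.pi * cl * t / |SD.ν j| ≤ Real.pi / 2 := by
      rw [div_le_iff₀ hν0]
      have h5 : cl * t ≤ |SD.ν j| / 2 := by
        have h6 := mul_le_mul_of_nonneg_left ht_ν hcl0.le
        rwa [show cl * (|SD.ν j| / (2 * cl)) = |SD.ν j| / 2 by field_simp] at h6
      have h7 := mul_le_mul_of_nonneg_left h5 hπ.le
      calc Real.pi * cl * t = Real.pi * (cl * t) := by ring
        _ ≤ Real.pi * (|SD.ν j| / 2) := h7
        _ = Real.pi / 2 * |SD.ν j| := by ring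
    rw [h1]
    exact (h2.trans h3.le).trans h4
  have hcos : Real.cos (θ₁ - θ₂) ≤ 0 := by
    rw [hθdiff]
    obtain ⟨hel, her⟩ := abs_le.mp herr
    rcases lt_or_gt_of_ne hp with hneg | hpos
    · have h1 : p * Real.pi / |p| = -Real.pi := by
        rw [abs_of_neg hneg, div_neg, mul_comm, mul_div_assoc, div_self hp, mul_one]
      rw [h1, show -Real.pi + err = -(Real.pi - err) by ring, Real.cos_neg]
      exact Real.cos_nonpos_of_pi_div_two_le_of_le (by linarith) (by linarith)
    · have h1 : p * Real.pi / |p| = Real.pi := by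
        rw [abs_of_pos hpos, mul_comm, mul_div_assoc, div_self hp, mul_one]
      rw [h1]
      exact Real.cos_nonpos_of_pi_div_two_le_of_le (by linarith) (by linarith)
  have hsqrt2 := aux_abs_exp_sub θ₁ θ₂ hcos
  -- lower bound for ‖T‖
  have hTnorm : 1 ≤ ‖T‖ := by
    have h6 : ‖(Complex.exp (-(Complex.I * θ₁)) - Complex.exp (-(Complex.I * θ₂))) • ω‖
        = ‖Complex.exp (-(Complex.I * θ₁)) - Complex.exp (-(Complex.I * θ₂))‖ := by
      rw [norm_smul, hω1, mul_one]
    have h7 : ‖Complex.exp (-(Complex.I * θ₁)) • (φt - ω)‖ ≤ cφ * t := by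
      rw [norm_smul, habs1, one_mul]
      exact hφω
    have h8 : ‖S.E t σ (ω - φt)‖ ≤ cφ * t := by
      rw [S.E_isometry, norm_sub_rev]
      exact hφω
    have h9 : ‖(Complex.exp (-(Complex.I * θ₁)) - Complex.exp (-(Complex.I * θ₂))) • ω‖
        ≤ ‖T ω‖ + (‖Complex.exp (-(Complex.I * θ₁)) • (φt - ω)‖ + ‖S.E t σ (ω - φt)‖) := by
      have h10 : (Complex.exp (-(Complex.I * θ₁)) - Complex.exp (-(Complex.I * θ₂))) • ω
          = T ω + (-(Complex.exp (-(Complex.I * θ₁)) • (φt - ω)) + -(S.E t σ (ω - φt))) := by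
        rw [hTω]; abel
      rw [h10]
      refine (norm_add_le _ _).trans ?_
      gcongr
      refine (norm_add_le _ _).trans ?_
      rw [norm_neg, norm_neg]
    have hsq : (5/4 : ℝ) ≤ Real.sqrt 2 := by
      rw [Real.le_sqrt' (by norm_num)]
      norm_num
    have hcφ' : cφ ≠ 0 := hcφ0.ne'
    have hcφt : cφ * t ≤ 1/8 := by
      have h11 := mul_le_mul_of_nonneg_left ht_φ hcφ0.le
      rwa [show cφ * (1 / (8 * cφ)) = 1/8 by field_simp] at h11
    have hTω1 : 1 ≤ ‖T ω‖ := by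
      rw [h6] at h9
      linarith only [h9, h7, h8, hsqrt2, hsq, hcφt]
    calc (1:ℝ) ≤ ‖T ω‖ := hTω1
      _ ≤ ‖T‖ * ‖ω‖ := T.le_opNorm ω
      _ = ‖T‖ := by rw [hω1, mul_one]
  -- lower bound for the smoothing factor
  have htsq : (0:ℝ) < t ^ 2 := by positivity
  have hF : D * t ^ s ≤ ε ^ s / (t ^ 2 + ε ^ 2) ^ (s/2) := by
    have hnum : ε ^ s = a ^ s * ((t ^ 2 : ℝ)) ^ s := by
      rw [hεdef, Real.mul_rpow ha.le (sq_nonneg t)]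
    have hat : a * t ≤ 1 := by
      have := mul_le_mul_of_nonneg_left ht_a ha.le
      rwa [mul_inv_cancel₀ ha.ne'] at this
    have hee : ε ^ 2 ≤ t ^ 2 := by
      have h1 : ε ^ 2 = (a * t) ^ 2 * t ^ 2 := by rw [hεdef]; ring
      have h2 : (a * t) ^ 2 ≤ 1 := pow_le_one₀ (by positivity) hat
      calc ε ^ 2 = (a * t) ^ 2 * t ^ 2 := h1
        _ ≤ 1 * t ^ 2 := mul_le_mul_of_nonneg_right h2 (sq_nonneg t)
        _ = t ^ 2 := one_mul _
    have hden : (t ^ 2 + ε ^ 2 : ℝ) ^ (s/2) ≤ (2:ℝ) ^ (s/2) * ((t ^ 2 : ℝ)) ^ (s/2) := by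
      calc (t ^ 2 + ε ^ 2 : ℝ) ^ (s/2) ≤ ((2 * t ^ 2 : ℝ)) ^ (s/2) :=
            Real.rpow_le_rpow (by positivity) (by linarith) (by linarith)
        _ = (2:ℝ) ^ (s/2) * ((t ^ 2 : ℝ)) ^ (s/2) :=
            Real.mul_rpow (by norm_num) (by positivity)
    have h10 : ((t ^ 2 : ℝ)) ^ s = ((t ^ 2 : ℝ)) ^ (s/2) * ((t ^ 2 : ℝ)) ^ (s/2) := by
      rw [← Real.rpow_add htsq]
      ring_nf
    have h11 : ((t ^ 2 : ℝ)) ^ (s/2) = t ^ s := by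
      rw [show (t ^ 2 : ℝ) = t ^ ((2:ℕ) : ℝ) from (Real.rpow_natCast t 2).symm,
        ← Real.rpow_mul ht.le]
      congr 1
      push_cast
      ring
    have hdpos : (0:ℝ) < (t ^ 2 + ε ^ 2 : ℝ) ^ (s/2) := Real.rpow_pos_of_pos (by positivity) _
    have h12 : D * t ^ s = a ^ s * ((t ^ 2 : ℝ)) ^ s / ((2:ℝ) ^ (s/2) * ((t ^ 2 : ℝ)) ^ (s/2)) := by
      rw [hDdef, h10, ← h11]
      have h13 : ((t ^ 2 : ℝ)) ^ (s/2) ≠ 0 := by positivity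
      field_simp
    rw [h12, hnum]
    gcongr
  have hdpos : (0:ℝ) < (t ^ 2 + ε ^ 2 : ℝ) ^ (s/2) := Real.rpow_pos_of_pos (by positivity) _
  have hchain : D * t ^ s ≤ C * ε := by
    refine (hF.trans ?_).trans hkey
    exact le_mul_of_one_le_left (by positivity) hTnorm
  have htb2 : t ^ (2 - s) ≤ D / (2 * C * a) := by
    calc t ^ (2 - s) ≤ tb ^ (2 - s) := Real.rpow_le_rpow ht.le ht_b h2s'.le
      _ = D / (2 * C * a) := by
          rw [htbdef]
          exact Real.rpow_inv_rpow (by positivity) h2s'.ne'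
  have ht2 : (t : ℝ) ^ (2:ℕ) = t ^ s * t ^ (2 - s) := by
    rw [← Real.rpow_natCast t 2, ← Real.rpow_add ht]
    norm_num
  have hts_pos : (0:ℝ) < t ^ s := Real.rpow_pos_of_pos ht s
  have hfinal : C * ε ≤ (D/2) * t ^ s := by
    calc C * ε = (C * a * t ^ s) * t ^ (2 - s) := by rw [hεdef, ht2]; ring
      _ ≤ (C * a * t ^ s) * (D / (2 * C * a)) :=
          mul_le_mul_of_nonneg_left htb2 (by positivity)
      _ = (D/2) * t ^ s := by
          have hC' : C ≠ 0 := hC.ne'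
          have ha' : a ≠ 0 := ha.ne'
          field_simp
  linarith only [hchain, hfinal, mul_pos hD hts_pos]
end
end

section
/- Suppose that in the analytic eigenvalue expansions λ_l(t) = γ_l t² + μ_l t³ + … of A(t) one has μ_j ≠ 0 for some j (i.e., N₀ ≠ 0). Let s ≥ 3. Then there does not exist a positive function C(τ) with lim_{τ→∞} C(τ)/|τ| = 0 such that ‖e^{-iτε^{-2}A(t)}P − e^{-iτε^{-2}t²SP}P‖ · ε^{s}(t²+ε²)^{-s/2} ≤ C(τ)ε holds for all τ ∈ ℝ and all sufficiently small |t| and ε > 0. -/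
/-!
Birman–Suslina abstract operator-theoretic scheme.

`BSScheme` encodes: complex separable Hilbert spaces `H`, `Hs`; a densely defined
closed operator `X₀ : H → Hs`; a bounded operator `X₁`; the family
`X(t) = X₀ + t X₁` and the selfadjoint nonnegative operator family
`A(t) = X(t)* X(t)` (encoded through its quadratic form); the kernel
`𝔑 = Ker A(0) = Ker X₀` of finite dimension `n` with `n ≤ dim Ker X₀*`;
the orthogonal projections `P`, `P*` onto `𝔑` and `𝔑* = Ker X₀* = (Ran X₀)ᗮ`;
the spectral gap data `0 < 8δ < d⁰` (the point `0` is isolated in the spectrum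
of `A₀`); the operator `Z` (solving the weak problem `X₀*(X₀ ψ + X₁ ω) = 0`);
and the unitary group `E t τ = e^{-iτ A(t)}` generated by `A(t)`.
-/

noncomputable section

open ContinuousLinearMap

section Helpers

open ContinuousLinearMap

lemma exp_apply_eigvec {H : Type*} [NormedAddCommGroup H] [NormedSpace ℂ H]
    [CompleteSpace H] (T : H →L[ℂ] H) (a : ℂ) (x : H) (hx : T x = a • x) :
    NormedSpace.exp T x = Complex.exp a • x := by
  have hpow : ∀ n : ℕ, (T ^ n) x = a ^ n • x := by
    intro n
    induction n with
    | zero => simp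
    | succ n ih =>
      rw [pow_succ, ContinuousLinearMap.mul_apply, hx, map_smul, ih, smul_smul, mul_comm,
        ← pow_succ]
  have hs1 : Summable fun n : ℕ => ((n.factorial : ℂ))⁻¹ • T ^ n :=
    NormedSpace.expSeries_summable' T
  have hs2 : Summable fun n : ℕ => ((n.factorial : ℂ))⁻¹ • a ^ n :=
    NormedSpace.expSeries_summable' a
  calc NormedSpace.exp T x
      = (∑' n : ℕ, ((n.factorial : ℂ))⁻¹ • T ^ n) x := by rw [NormedSpace.exp_eq_tsum ℂ]
    _ = ∑' n : ℕ, (((n.factorial : ℂ))⁻¹ • T ^ n) x := by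
        simpa [ContinuousLinearMap.apply_apply] using
          (ContinuousLinearMap.apply ℂ H x).map_tsum hs1
    _ = ∑' n : ℕ, (((n.factorial : ℂ))⁻¹ • a ^ n) • x := by
        refine tsum_congr fun n => ?_
        rw [ContinuousLinearMap.smul_apply, hpow, smul_smul, smul_eq_mul]
    _ = (∑' n : ℕ, ((n.factorial : ℂ))⁻¹ • a ^ n) • x := hs2.tsum_smul_const x
    _ = Complex.exp a • x := by
        congr 1
        rw [Complex.exp_eq_exp_ℂ, NormedSpace.exp_eq_tsum ℂ]

lemma BSScheme.E_apply_eigvec (S : BSScheme) (t τ lam : ℝ) (φ : S.H)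
    (hd : φ ∈ (S.A t).domain) (heig : (S.A t) ⟨φ, hd⟩ = (lam : ℂ) • φ) :
    S.E t τ φ = Complex.exp (-(Complex.I * lam * τ)) • φ := by
  set c : ℂ := Complex.I * lam with hc
  have hg : ∀ σ : ℝ, HasDerivAt (fun s : ℝ => Complex.exp (c * s) • S.E t s φ) 0 σ := by
    intro σ
    have hc1 : HasDerivAt (fun s : ℝ => (s : ℂ)) 1 σ := by
      simpa using (hasDerivAt_id σ).ofReal_comp
    have h1 : HasDerivAt (fun s : ℝ => Complex.exp (c * s)) (Complex.exp (c * σ) * c) σ := by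
      have := (hc1.const_mul c).cexp
      simpa [mul_comm] using this
    have h2 := S.E_gen t σ ⟨φ, hd⟩
    rw [heig] at h2
    have h2' : HasDerivAt (fun s : ℝ => S.E t s φ)
        (-(Complex.I • ((lam : ℂ) • S.E t σ φ))) σ := by
      simpa [map_smul] using h2
    have h3 := h1.smul h2'
    convert h3 using 1
    · rfl
    rw [hc]
    module
  have hdiff : Differentiable ℝ (fun s : ℝ => Complex.exp (c * s) • S.E t s φ) :=
    fun σ => (hg σ).differentiableAt
  have hconst := is_const_of_deriv_eq_zero hdiff (fun σ => (hg σ).deriv) τ 0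
  simp only [Complex.ofReal_zero, mul_zero, Complex.exp_zero, one_smul, S.E_zero,
    ContinuousLinearMap.id_apply] at hconst
  have h4 := congrArg (fun v => Complex.exp (-(c * τ)) • v) hconst
  simp only [smul_smul, ← Complex.exp_add, neg_add_cancel, Complex.exp_zero, one_smul] at h4
  rw [h4, hc, mul_assoc]

end Helpers

/-- Suppose that in the eigenvalue expansions
`λ_l(t) = γ_l t² + μ_l t³ + …` one has `μ_j ≠ 0` for some `j` (i.e. `N₀ ≠ 0`).
Let `s ≥ 3`. Then there is no positive function `C(τ)` with
`lim_{τ→∞} C(τ)/|τ| = 0` such that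
`‖e^{-iτε⁻²A(t)}P − e^{-iτε⁻²t²SP}P‖ εˢ(t²+ε²)^{-s/2} ≤ C(τ) ε` for all
`τ ∈ ℝ` and all sufficiently small `|t|` and `ε > 0`. -/
theorem exp_approx_time_sharp_general (S : BSScheme) (SD : SpecData S)
    (hμ : ∃ j, SD.μ j ≠ 0) (s : ℝ) (hs : 3 ≤ s) :
    ¬ ∃ C : ℝ → ℝ, (∀ τ, 0 < C τ) ∧
        Filter.Tendsto (fun τ : ℝ => C τ / |τ|) Filter.atTop (nhds 0) ∧
        ∃ t₁ > (0 : ℝ), ∃ ε₁ > (0 : ℝ), ∀ τ t ε : ℝ,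
          |t| ≤ t₁ → 0 < ε → ε ≤ ε₁ →
          ‖(S.E t (τ / ε ^ 2)
              - NormedSpace.exp
                  (((-Complex.I) * ((τ / ε ^ 2 * t ^ 2 : ℝ) : ℂ)) • S.germ))
              ∘L S.P‖ * (ε ^ s / (t ^ 2 + ε ^ 2) ^ (s / 2)) ≤ C τ * ε := by
  rintro ⟨C, hCpos, hClim, t₁, ht₁, ε₁, hε₁, hbound⟩
  obtain ⟨j, hμj⟩ := hμ
  obtain ⟨cφ0, hcφ0⟩ := SD.φ_expansion
  obtain ⟨cB0, hcB0⟩ := SD.lam_expansion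
  set cφ : ℝ := max cφ0 0 with hcφdef
  set cB : ℝ := max cB0 0 with hcBdef
  have hcφ : ∀ l (t : ℝ), |t| ≤ SD.tstar → ‖SD.φ l t - SD.ω l‖ ≤ cφ * |t| := fun l t ht =>
    (hcφ0 l t ht).trans (mul_le_mul_of_nonneg_right (le_max_left _ _) (abs_nonneg t))
  have hcB : ∀ l (t : ℝ), |t| ≤ SD.tstar →
      |SD.lam l t - (SD.γ l * t ^ 2 + SD.μ l * t ^ 3 + SD.ν l * t ^ 4)| ≤ cB * |t| ^ 5 :=
    fun l t ht => (hcB0 l t ht).trans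
      (mul_le_mul_of_nonneg_right (le_max_left _ _) (by positivity))
  have hcφ_nonneg : 0 ≤ cφ := le_max_right _ _
  set K : ℝ := Real.pi / |SD.μ j| with hKdef
  have hKpos : 0 < K := div_pos Real.pi_pos (abs_pos.mpr hμj)
  set Q : ℝ := ((2 : ℝ) ^ (s / 2))⁻¹ with hQdef
  have hQpos : 0 < Q := inv_pos.mpr (Real.rpow_pos_of_pos two_pos _)
  set κ : ℝ := Q / (2 * K) with hκdef
  have hκpos : 0 < κ := div_pos hQpos (by positivity)
  -- choose a suitable large τ
  have hKτ : Filter.Tendsto (fun τ : ℝ => K / τ) Filter.atTop (nhds 0) :=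
    Filter.Tendsto.div_atTop tendsto_const_nhds Filter.tendsto_id
  have h2 : Filter.Tendsto (fun τ : ℝ => cB * K ^ 3 / τ ^ 2 + |SD.ν j| * K ^ 2 / τ)
      Filter.atTop (nhds 0) := by
    have a1 : Filter.Tendsto (fun τ : ℝ => cB * K ^ 3 / τ ^ 2) Filter.atTop (nhds 0) :=
      Filter.Tendsto.div_atTop tendsto_const_nhds (Filter.tendsto_pow_atTop two_ne_zero)
    have a2 : Filter.Tendsto (fun τ : ℝ => |SD.ν j| * K ^ 2 / τ) Filter.atTop (nhds 0) :=
      Filter.Tendsto.div_atTop tendsto_const_nhds Filter.tendsto_id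
    simpa using a1.add a2
  have h3 : Filter.Tendsto (fun τ : ℝ => cφ * (K / τ)) Filter.atTop (nhds 0) := by
    simpa using Filter.Tendsto.mul (tendsto_const_nhds (x := cφ)) hKτ
  have hEv : ∀ᶠ τ : ℝ in Filter.atTop,
      0 < τ ∧ K / τ ≤ t₁ ∧ K / τ ≤ ε₁ ∧ K / τ ≤ SD.tstar ∧
      cB * K ^ 3 / τ ^ 2 + |SD.ν j| * K ^ 2 / τ ≤ 4⁻¹ ∧ cφ * (K / τ) ≤ 4⁻¹ ∧
      C τ / |τ| < κ := by
    filter_upwards [Filter.eventually_gt_atTop 0,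
      hKτ.eventually (eventually_le_nhds ht₁), hKτ.eventually (eventually_le_nhds hε₁),
      hKτ.eventually (eventually_le_nhds SD.tstar_pos),
      h2.eventually (eventually_le_nhds (by norm_num : (0:ℝ) < 4⁻¹)),
      h3.eventually (eventually_le_nhds (by norm_num : (0:ℝ) < 4⁻¹)),
      hClim.eventually (eventually_lt_nhds hκpos)] with τ p1 p2 p3 p4 p5 p6 p7
    exact ⟨p1, p2, p3, p4, p5, p6, p7⟩
  obtain ⟨τ, hτpos, hp2, hp3, hp4, hp5, hp6, hp7⟩ := hEv.exists
  -- the choices of t and ε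
  set t : ℝ := Real.pi / (τ * SD.μ j) with htdef
  set ε : ℝ := K / τ with hεdef
  have hεpos : 0 < ε := div_pos hKpos hτpos
  have habs : |t| = ε := by
    rw [htdef, hεdef, hKdef, abs_div, abs_of_pos Real.pi_pos, abs_mul, abs_of_pos hτpos,
      div_div, mul_comm]
  have ht2 : t ^ 2 = ε ^ 2 := by rw [← sq_abs, habs]
  have htne : t ≠ 0 := by
    intro h; rw [h, abs_zero] at habs; exact hεpos.ne habs
  have htt1 : |t| ≤ t₁ := by rw [habs]; exact hp2
  have hεε₁ : ε ≤ ε₁ := hp3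
  have htstar : |t| ≤ SD.tstar := by rw [habs]; exact hp4
  have hb := hbound τ t ε htt1 hεpos hεε₁
  set τ' : ℝ := τ / ε ^ 2 with hτ'def
  have hτ'pos : 0 < τ' := div_pos hτpos (by positivity)
  set θ : ℝ := τ' * t ^ 2 with hθdef
  -- the ratio equals Q
  have hεs : (0 : ℝ) < ε ^ s := Real.rpow_pos_of_pos hεpos s
  have hratio : ε ^ s / (t ^ 2 + ε ^ 2) ^ (s / 2) = Q := by
    have h1 : t ^ 2 + ε ^ 2 = 2 * ε ^ 2 := by rw [ht2]; ring
    rw [h1, Real.mul_rpow (by norm_num) (sq_nonneg ε), ← Real.rpow_natCast ε 2,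
      ← Real.rpow_mul hεpos.le]
    have h2' : ((2 : ℕ) : ℝ) * (s / 2) = s := by push_cast; ring
    rw [h2', hQdef, mul_comm, ← div_div, div_self hεs.ne', one_div]
  -- the eigenvalue branch
  obtain ⟨hd, heig⟩ := SD.φ_eig j t htstar
  have hEφ := S.E_apply_eigvec t τ' (SD.lam j t) (SD.φ j t) hd heig
  have hT : (((-Complex.I) * (θ : ℂ)) • S.germ) (SD.ω j)
      = (((-Complex.I) * (θ : ℂ)) * (SD.γ j : ℂ)) • SD.ω j := by
    rw [ContinuousLinearMap.smul_apply, SD.germ_eig j, smul_smul]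
  have hexpω : NormedSpace.exp (((-Complex.I) * (θ : ℂ)) • S.germ) (SD.ω j)
      = Complex.exp (((-Complex.I) * (θ : ℂ)) * (SD.γ j : ℂ)) • SD.ω j :=
    exp_apply_eigvec _ _ _ hT
  -- phase analysis
  set e : ℝ := (SD.lam j t * τ' - θ * SD.γ j) - Real.pi with hedef
  have hπeq : τ' * (SD.μ j * t ^ 3) = Real.pi := by
    rw [hτ'def, ← ht2, htdef]
    field_simp
  have hesmall : |e| ≤ 4⁻¹ := by
    have hr := hcB j t htstar
    have heeq : e = τ' * (SD.lam j t - (SD.γ j * t ^ 2 + SD.μ j * t ^ 3 + SD.ν j * t ^ 4))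
        + τ' * (SD.ν j * t ^ 4) := by
      rw [hedef, hθdef]
      linear_combination hπeq
    have ht4 : t ^ 4 = ε ^ 4 := by
      rw [show t ^ 4 = (t ^ 2) ^ 2 by ring, ht2]; ring
    have b1 : |τ' * (SD.lam j t - (SD.γ j * t ^ 2 + SD.μ j * t ^ 3 + SD.ν j * t ^ 4))|
        ≤ τ' * (cB * |t| ^ 5) := by
      rw [abs_mul, abs_of_pos hτ'pos]
      exact mul_le_mul_of_nonneg_left hr hτ'pos.le
    have b2 : |τ' * (SD.ν j * t ^ 4)| = τ' * (|SD.ν j| * t ^ 4) := by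
      rw [abs_mul, abs_of_pos hτ'pos, abs_mul, abs_of_nonneg (by positivity : (0:ℝ) ≤ t ^ 4)]
    have h6 : |e| ≤ τ' * (cB * |t| ^ 5) + τ' * (|SD.ν j| * t ^ 4) := by
      rw [heeq]
      refine (abs_add_le _ _).trans ?_
      rw [b2]
      exact add_le_add b1 le_rfl
    have h7 : τ' * (cB * |t| ^ 5) + τ' * (|SD.ν j| * t ^ 4)
        = cB * K ^ 3 / τ ^ 2 + |SD.ν j| * K ^ 2 / τ := by
      rw [habs, ht4, hτ'def, hεdef]
      field_simp
    rw [h7] at h6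
    linarith
  -- the scalar difference is large
  have hphase : (-(Complex.I * (SD.lam j t : ℂ) * (τ' : ℂ)))
      = (((-Complex.I) * (θ : ℂ)) * (SD.γ j : ℂ)) + (-((Real.pi : ℂ) * Complex.I))
        + (-(Complex.I * (e : ℂ))) := by
    rw [hedef]
    push_cast
    ring
  have hD : Complex.exp (-(Complex.I * (SD.lam j t : ℂ) * (τ' : ℂ)))
      - Complex.exp (((-Complex.I) * (θ : ℂ)) * (SD.γ j : ℂ))
      = Complex.exp (((-Complex.I) * (θ : ℂ)) * (SD.γ j : ℂ))
        * ((-Complex.exp (-(Complex.I * (e : ℂ)))) - 1) := by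
    rw [hphase, Complex.exp_add, Complex.exp_add]
    rw [Complex.exp_neg, Complex.exp_pi_mul_I]
    ring
  have habs1 : ‖Complex.exp (((-Complex.I) * (θ : ℂ)) * (SD.γ j : ℂ))‖ = 1 := by
    rw [Complex.norm_exp]
    simp
  have hexpe : ‖Complex.exp (-(Complex.I * (e : ℂ))) - 1‖ ≤ 2 * |e| := by
    have habse : ‖-(Complex.I * (e : ℂ))‖ = |e| := by
      simp
    have h8 := Complex.norm_exp_sub_one_le (x := -(Complex.I * (e : ℂ)))
      (by rw [habse]; linarith)
    rw [habse] at h8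
    simpa using h8
  have habsD : ‖Complex.exp (-(Complex.I * (SD.lam j t : ℂ) * (τ' : ℂ)))
      - Complex.exp (((-Complex.I) * (θ : ℂ)) * (SD.γ j : ℂ))‖ ≥ 3 / 2 := by
    rw [hD, norm_mul, habs1, one_mul]
    have key : ((-Complex.exp (-(Complex.I * (e : ℂ)))) - 1)
        = -((2 : ℂ) + (Complex.exp (-(Complex.I * (e : ℂ))) - 1)) := by ring
    rw [key, norm_neg]
    have h9 := norm_add_le ((2 : ℂ) + (Complex.exp (-(Complex.I * (e : ℂ))) - 1))
      (-(Complex.exp (-(Complex.I * (e : ℂ))) - 1))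
    simp only [add_neg_cancel_right, norm_neg] at h9
    have h10 : ‖(2 : ℂ)‖ = 2 := by norm_num
    rw [h10] at h9
    linarith
  -- the vector estimate
  have hωnorm : ‖SD.ω j‖ = 1 := SD.ω_orthonormal.1 j
  have hφω : ‖SD.φ j t - SD.ω j‖ ≤ cφ * ε := by
    rw [← habs]; exact hcφ j t htstar
  have hPω : S.P (SD.ω j) = SD.ω j := S.P_fix _ (SD.ω_mem j)
  have happly : ((S.E t τ' - NormedSpace.exp (((-Complex.I) * (θ : ℂ)) • S.germ)) ∘L S.P)
        (SD.ω j)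
      = (Complex.exp (-(Complex.I * (SD.lam j t : ℂ) * (τ' : ℂ)))
          - Complex.exp (((-Complex.I) * (θ : ℂ)) * (SD.γ j : ℂ))) • SD.ω j
        + (Complex.exp (-(Complex.I * (SD.lam j t : ℂ) * (τ' : ℂ))) • (SD.φ j t - SD.ω j)
          + S.E t τ' (SD.ω j - SD.φ j t)) := by
    rw [ContinuousLinearMap.comp_apply, hPω, ContinuousLinearMap.sub_apply, hexpω]
    have hEω : S.E t τ' (SD.ω j) = S.E t τ' (SD.φ j t) + S.E t τ' (SD.ω j - SD.φ j t) := by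
      rw [← map_add]; congr 1; abel
    rw [hEω, hEφ]
    module
  have habs2 : ‖Complex.exp (-(Complex.I * (SD.lam j t : ℂ) * (τ' : ℂ)))‖ = 1 := by
    rw [Complex.norm_exp]
    simp
  have hnorm_ge : ‖((S.E t τ' - NormedSpace.exp (((-Complex.I) * (θ : ℂ)) • S.germ))
      ∘L S.P) (SD.ω j)‖ ≥ 3 / 2 - 2 * (cφ * ε) := by
    rw [happly]
    have h1 : ‖(Complex.exp (-(Complex.I * (SD.lam j t : ℂ) * (τ' : ℂ)))
        - Complex.exp (((-Complex.I) * (θ : ℂ)) * (SD.γ j : ℂ))) • SD.ω j‖ ≥ 3 / 2 := by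
      rw [norm_smul, hωnorm, mul_one]
      exact habsD
    have h2' : ‖Complex.exp (-(Complex.I * (SD.lam j t : ℂ) * (τ' : ℂ)))
        • (SD.φ j t - SD.ω j)‖ ≤ cφ * ε := by
      rw [norm_smul, habs2, one_mul]; exact hφω
    have h3' : ‖S.E t τ' (SD.ω j - SD.φ j t)‖ ≤ cφ * ε := by
      rw [S.E_isometry, norm_sub_rev]; exact hφω
    have h11 := norm_add_le (Complex.exp (-(Complex.I * (SD.lam j t : ℂ) * (τ' : ℂ)))
      • (SD.φ j t - SD.ω j)) (S.E t τ' (SD.ω j - SD.φ j t))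
    have h12 := norm_add_le
      ((Complex.exp (-(Complex.I * (SD.lam j t : ℂ) * (τ' : ℂ)))
          - Complex.exp (((-Complex.I) * (θ : ℂ)) * (SD.γ j : ℂ))) • SD.ω j
        + (Complex.exp (-(Complex.I * (SD.lam j t : ℂ) * (τ' : ℂ))) • (SD.φ j t - SD.ω j)
          + S.E t τ' (SD.ω j - SD.φ j t)))
      (-(Complex.exp (-(Complex.I * (SD.lam j t : ℂ) * (τ' : ℂ))) • (SD.φ j t - SD.ω j)
          + S.E t τ' (SD.ω j - SD.φ j t)))
    simp only [add_neg_cancel_right, norm_neg] at h12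
    linarith
  have hopP : ‖(S.E t τ' - NormedSpace.exp (((-Complex.I) * (θ : ℂ)) • S.germ))
      ∘L S.P‖ ≥ 1 := by
    have h13 := ((S.E t τ' - NormedSpace.exp (((-Complex.I) * (θ : ℂ)) • S.germ))
      ∘L S.P).le_opNorm (SD.ω j)
    rw [hωnorm, mul_one] at h13
    have h14 : cφ * ε ≤ 4⁻¹ := hp6
    linarith
  -- conclusion
  rw [hratio] at hb
  have hmatch : ((τ' * t ^ 2 : ℝ) : ℂ) = (θ : ℂ) := by rw [hθdef]
  rw [hmatch] at hb
  have hfin : Q ≤ C τ * ε := by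
    calc Q = 1 * Q := (one_mul Q).symm
      _ ≤ ‖(S.E t τ' - NormedSpace.exp (((-Complex.I) * (θ : ℂ)) • S.germ)) ∘L S.P‖ * Q :=
          mul_le_mul_of_nonneg_right hopP hQpos.le
      _ ≤ C τ * ε := hb
  have hCε : C τ * ε < Q / 2 := by
    have h15 : C τ * ε = C τ / τ * K := by rw [hεdef]; ring
    have h16 : C τ / τ < κ := by
      rwa [abs_of_pos hτpos] at hp7
    have h17 : κ * K = Q / 2 := by
      rw [hκdef]; field_simp
    calc C τ * ε = C τ / τ * K := h15
      _ < κ * K := by exact mul_lt_mul_of_pos_right h16 hKpos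
      _ = Q / 2 := h17
  linarith
end
end

section
/- Assume the nondegeneracy condition A(t) ≥ c* t² I for |t| ≤ t⁰ (c* > 0). Suppose that in the analytic eigenvalue expansions λ_l(t) = γ_l t² + μ_l t³ + ν_l t⁴ + … of A(t) one has μ_l = 0 for all l (i.e., N₀ = 0), while ν_j ≠ 0 for at least one j (i.e., 𝒩^{(q)} ≠ 0 for some q). Let s ≥ 2. Then there does not exist a positive function C(τ) with lim_{τ→∞} C(τ)/|τ|^{1/2} = 0 such that ‖e^{-iτε^{-2}A(t)}P − e^{-iτε^{-2}t²SP}P‖ · ε^{s}(t²+ε²)^{-s/2} ≤ C(τ)ε holds for all τ ∈ ℝ and all sufficiently small |t| and ε > 0. -/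
/-!
Birman–Suslina abstract operator-theoretic scheme.

`BSScheme` encodes: complex separable Hilbert spaces `H`, `Hs`; a densely defined
closed operator `X₀ : H → Hs`; a bounded operator `X₁`; the family
`X(t) = X₀ + t X₁` and the selfadjoint nonnegative operator family
`A(t) = X(t)* X(t)` (encoded through its quadratic form); the kernel
`𝔑 = Ker A(0) = Ker X₀` of finite dimension `n` with `n ≤ dim Ker X₀*`;
the orthogonal projections `P`, `P*` onto `𝔑` and `𝔑* = Ker X₀* = (Ran X₀)ᗮ`;
the spectral gap data `0 < 8δ < d⁰` (the point `0` is isolated in the spectrum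
of `A₀`); the operator `Z` (solving the weak problem `X₀*(X₀ ψ + X₁ ω) = 0`);
and the unitary group `E t τ = e^{-iτ A(t)}` generated by `A(t)`.
-/

noncomputable section

open ContinuousLinearMap

/-! Auxiliary lemmas -/

lemma exp_apply_eigenvector {H : Type*} [NormedAddCommGroup H] [NormedSpace ℂ H]
    [CompleteSpace H] (B : H →L[ℂ] H) (μ : ℂ) (v : H) (h : B v = μ • v) :
    NormedSpace.exp B v = Complex.exp μ • v := by
  have hpow : ∀ n : ℕ, (B ^ n) v = μ ^ n • v := by
    intro n
    induction n with
    | zero => simp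
    | succ n ih =>
        rw [pow_succ, pow_succ, ContinuousLinearMap.mul_apply, h, map_smul, ih,
          smul_smul, mul_comm]
  have hsum : Summable fun n : ℕ => ((n.factorial : ℂ))⁻¹ • B ^ n :=
    NormedSpace.expSeries_summable' B
  have hsum2 : Summable fun n : ℕ => ((n.factorial : ℂ))⁻¹ * μ ^ n := by
    simpa [smul_eq_mul] using NormedSpace.expSeries_summable' (𝕂 := ℂ) μ
  calc NormedSpace.exp B v = (∑' n : ℕ, ((n.factorial : ℂ))⁻¹ • B ^ n) v := by
        rw [NormedSpace.exp_eq_tsum (𝕂 := ℂ)]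
    _ = ∑' n : ℕ, (((n.factorial : ℂ))⁻¹ • B ^ n) v :=
        (ContinuousLinearMap.apply ℂ H v).map_tsum hsum
    _ = ∑' n : ℕ, (((n.factorial : ℂ))⁻¹ * μ ^ n) • v := by
        simp [hpow, smul_smul]
    _ = (∑' n : ℕ, ((n.factorial : ℂ))⁻¹ * μ ^ n) • v := hsum2.tsum_smul_const v
    _ = Complex.exp μ • v := by
        rw [Complex.exp_eq_exp_ℂ, NormedSpace.exp_eq_tsum (𝕂 := ℂ)]
        simp [smul_eq_mul]

lemma BSScheme.E_apply_eigenvector (S : BSScheme) (t lam : ℝ) (φ : S.H)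
    (hd : φ ∈ (S.A t).domain) (heig : (S.A t) ⟨φ, hd⟩ = (lam : ℂ) • φ) (θ : ℝ) :
    S.E t θ φ = Complex.exp (-(Complex.I * lam * θ)) • φ := by
  set c : ℂ := Complex.I * lam with hc
  have key : ∀ σ : ℝ, Complex.exp (c * σ) • S.E t σ φ = φ := by
    have hg : ∀ σ : ℝ, HasDerivAt
        (fun σ : ℝ => Complex.exp (c * (σ : ℂ)) • S.E t σ φ) 0 σ := by
      intro σ
      have h1 : HasDerivAt (fun s : ℝ => S.E t s φ)
          (-(Complex.I • S.E t σ ((S.A t) ⟨φ, hd⟩))) σ := S.E_gen t σ ⟨φ, hd⟩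
      rw [heig, map_smul] at h1
      have h0 : HasDerivAt (fun σ : ℝ => c * (σ : ℂ)) c σ := by
        simpa using (Complex.ofRealCLM.hasDerivAt (x := σ)).const_mul c
      have h2 := h0.cexp
      have h3 := h2.smul h1
      convert h3 using 1
      · rfl
      rw [hc]
      simp only [smul_smul, neg_smul, smul_neg, ← add_smul]
      rw [← neg_smul, ← add_smul]
      convert (zero_smul ℂ (S.E t σ φ)).symm using 2
      ring
    intro σ
    have hconst := is_const_of_deriv_eq_zero
      (fun x => ((hg x).differentiableAt : DifferentiableAt ℝ _ x))
      (fun x => (hg x).deriv) σ 0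
    simpa [S.E_zero t] using hconst
  have hkey := key θ
  have heq : S.E t θ φ = (Complex.exp (c * θ))⁻¹ • φ := by
    have h4 := congrArg (fun x => (Complex.exp (c * (θ : ℂ)))⁻¹ • x) hkey
    simpa [smul_smul, inv_mul_cancel₀ (Complex.exp_ne_zero (c * (θ : ℂ)))] using h4
  rw [heq, ← Complex.exp_neg]

/-- Assume the nondegeneracy condition `A(t) ≥ c⁎ t² I` for
`|t| ≤ t⁰`. Suppose that in the eigenvalue expansions
`λ_l(t) = γ_l t² + μ_l t³ + ν_l t⁴ + …` one has `μ_l = 0` for all `l`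
(i.e. `N₀ = 0`) while `ν_j ≠ 0` for some `j` (i.e. `𝒩^{(q)} ≠ 0` for some `q`).
Let `s ≥ 2`. Then there is no positive function `C(τ)` with
`lim_{τ→∞} C(τ)/|τ|^{1/2} = 0` such that
`‖e^{-iτε⁻²A(t)}P − e^{-iτε⁻²t²SP}P‖ εˢ(t²+ε²)^{-s/2} ≤ C(τ) ε` for all
`τ ∈ ℝ` and all sufficiently small `|t|` and `ε > 0`. -/
theorem exp_approx_time_sharp_enhanced (S : BSScheme) (SD : SpecData S)
    (cstar : ℝ) (hcstar : 0 < cstar)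
    (hnondeg : ∀ t : ℝ, |t| ≤ S.t0 → ∀ u : (S.A t).domain,
      cstar * t ^ 2 * ‖(u : S.H)‖ ^ 2 ≤ (inner ℂ ((S.A t) u) (u : S.H) : ℂ).re)
    (hμ : ∀ l, SD.μ l = 0) (hν : ∃ j, SD.ν j ≠ 0)
    (s : ℝ) (hs : 2 ≤ s) :
    ¬ ∃ C : ℝ → ℝ, (∀ τ, 0 < C τ) ∧
        Filter.Tendsto (fun τ : ℝ => C τ / Real.sqrt |τ|) Filter.atTop (nhds 0) ∧
        ∃ t₁ > (0 : ℝ), ∃ ε₁ > (0 : ℝ), ∀ τ t ε : ℝ,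
          |t| ≤ t₁ → 0 < ε → ε ≤ ε₁ →
          ‖(S.E t (τ / ε ^ 2)
              - NormedSpace.exp
                  (((-Complex.I) * ((τ / ε ^ 2 * t ^ 2 : ℝ) : ℂ)) • S.germ))
              ∘L S.P‖ * (ε ^ s / (t ^ 2 + ε ^ 2) ^ (s / 2)) ≤ C τ * ε := by
  rintro ⟨C, hCpos, hClim, t₁, ht₁, ε₁, hε₁, hbound⟩
  obtain ⟨j, hνj⟩ := hν
  obtain ⟨cφ, hcφ⟩ := SD.φ_expansion
  obtain ⟨clam, hclam⟩ := SD.lam_expansion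
  have hνabs : 0 < |SD.ν j| := abs_pos.mpr hνj
  set c₀ : ℝ := Real.sqrt (Real.pi / |SD.ν j|) with hc₀_def
  have hpiv : 0 < Real.pi / |SD.ν j| := div_pos Real.pi_pos hνabs
  have hc₀ : 0 < c₀ := Real.sqrt_pos.mpr hpiv
  have hc₀sq : c₀ ^ 2 = Real.pi / |SD.ν j| := Real.sq_sqrt hpiv.le
  have h2pos : (0:ℝ) < (2:ℝ) ^ (s/2) := Real.rpow_pos_of_pos two_pos _
  set q : ℝ := ((2:ℝ) ^ (s/2) * c₀)⁻¹ with hq_def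
  have hq : 0 < q := inv_pos.mpr (mul_pos h2pos hc₀)
  -- the scaling t = ε = c₀/√τ tends to 0 as τ → ∞
  have hsqrt : Filter.Tendsto Real.sqrt Filter.atTop Filter.atTop := by
    apply Filter.tendsto_atTop_atTop.2
    intro b
    refine ⟨(max b 0) ^ 2, fun a ha => ?_⟩
    calc b ≤ max b 0 := le_max_left b 0
      _ = Real.sqrt ((max b 0) ^ 2) := (Real.sqrt_sq (le_max_right b 0)).symm
      _ ≤ Real.sqrt a := Real.sqrt_le_sqrt ha
  have htt : Filter.Tendsto (fun τ : ℝ => c₀ / Real.sqrt τ) Filter.atTop (nhds 0) :=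
    Filter.Tendsto.div_atTop tendsto_const_nhds hsqrt
  have hminpos : 0 < min t₁ (min SD.tstar ε₁) := lt_min ht₁ (lt_min SD.tstar_pos hε₁)
  have e1 := htt.eventually_lt_const hminpos
  have e2 := htt.eventually_lt_const (show (0:ℝ) < (4*(|cφ|+1))⁻¹ by positivity)
  have e3 := htt.eventually_lt_const
    (show (0:ℝ) < (Real.pi/3) / ((|clam|+1) * c₀^2) by positivity)
  have e4 : ∀ᶠ τ : ℝ in Filter.atTop, (1:ℝ) ≤ τ := Filter.eventually_ge_atTop 1
  have e5 := hClim.eventually_lt_const hq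
  obtain ⟨τ, ⟨⟨⟨h1, h2⟩, h3⟩, h4⟩, h5⟩ := ((((e1.and e2).and e3).and e4).and e5).exists
  have hτpos : 0 < τ := lt_of_lt_of_le one_pos h4
  have hrtpos : 0 < Real.sqrt τ := Real.sqrt_pos.mpr hτpos
  set t : ℝ := c₀ / Real.sqrt τ with ht_def
  have htpos : 0 < t := div_pos hc₀ hrtpos
  have htabs : |t| = t := abs_of_pos htpos
  have ht_t₁ : t ≤ t₁ := (lt_of_lt_of_le h1 (min_le_left _ _)).le
  have ht_star : t ≤ SD.tstar :=
    (lt_of_lt_of_le h1 ((min_le_right _ _).trans (min_le_left _ _))).le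
  have ht_ε₁ : t ≤ ε₁ :=
    (lt_of_lt_of_le h1 ((min_le_right _ _).trans (min_le_right _ _))).le
  have htstar' : |t| ≤ SD.tstar := by rwa [htabs]
  have ht2pos : (0:ℝ) < t ^ 2 := pow_pos htpos 2
  set θ : ℝ := τ / t ^ 2 with hθ_def
  have hθpos : 0 < θ := div_pos hτpos ht2pos
  have id1 : θ * t ^ 2 = τ := by
    rw [hθ_def]; exact div_mul_cancel₀ τ ht2pos.ne'
  have hts : t ^ 2 = c₀ ^ 2 / τ := by
    rw [ht_def, div_pow, Real.sq_sqrt hτpos.le]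
  have id2 : θ * t ^ 4 = c₀ ^ 2 := by
    have h' : θ * t ^ 4 = θ * t ^ 2 * t ^ 2 := by ring
    rw [h', id1, hts]
    field_simp
  -- eigendata at t
  obtain ⟨hdom, heig⟩ := SD.φ_eig j t htstar'
  set w : S.H := SD.ω j with hw_def
  set f : S.H := SD.φ j t with hf_def
  have hωnorm : ‖w‖ = 1 := SD.ω_orthonormal.1 j
  have hφω : ‖f - w‖ ≤ |cφ| * t := by
    calc ‖f - w‖ ≤ cφ * |t| := hcφ j t htstar'
      _ ≤ |cφ| * t := by
          rw [htabs]; exact mul_le_mul_of_nonneg_right (le_abs_self cφ) htpos.le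
  have hE : S.E t θ f = Complex.exp (-(Complex.I * (SD.lam j t) * θ)) • f :=
    BSScheme.E_apply_eigenvector S t (SD.lam j t) f hdom heig θ
  have hgermω : S.germ w = ((SD.γ j : ℝ) : ℂ) • w := SD.germ_eig j
  have hBω : (((-Complex.I) * ((θ * t ^ 2 : ℝ) : ℂ)) • S.germ) w
      = ((-Complex.I) * ((θ * t ^ 2 : ℝ) : ℂ) * (SD.γ j : ℂ)) • w := by
    rw [ContinuousLinearMap.smul_apply, hgermω, smul_smul]
  have hexpB : NormedSpace.exp (((-Complex.I) * ((θ * t ^ 2 : ℝ) : ℂ)) • S.germ) w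
      = Complex.exp ((-Complex.I) * ((θ * t ^ 2 : ℝ) : ℂ) * (SD.γ j : ℂ)) • w :=
    exp_apply_eigenvector _ _ _ hBω
  -- phases
  set a : ℝ := SD.lam j t * θ with ha_def
  set b : ℝ := τ * SD.γ j with hb_def
  set d : ℝ := a - b with hd_def
  have hc₁ : Complex.exp (-(Complex.I * (SD.lam j t) * θ))
      = Complex.exp (((-a : ℝ) : ℂ) * Complex.I) := by
    congr 1
    rw [ha_def]
    push_cast
    ring
  have hc₂ : Complex.exp ((-Complex.I) * ((θ * t ^ 2 : ℝ) : ℂ) * (SD.γ j : ℂ))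
      = Complex.exp (((-b : ℝ) : ℂ) * Complex.I) := by
    rw [id1]
    congr 1
    rw [hb_def]
    push_cast
    ring
  have hsplit : Complex.exp (((-a : ℝ) : ℂ) * Complex.I)
        - Complex.exp (((-b : ℝ) : ℂ) * Complex.I)
      = Complex.exp (((-b : ℝ) : ℂ) * Complex.I)
        * (Complex.exp (((-d : ℝ) : ℂ) * Complex.I) - 1) := by
    rw [mul_sub, mul_one, ← Complex.exp_add]
    congr 1
    rw [hd_def]
    push_cast
    ring
  -- the remainder of the phase
  set x : ℝ := d - SD.ν j * c₀ ^ 2 with hx_def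
  have hxval : x = θ * (SD.lam j t
      - (SD.γ j * t ^ 2 + SD.μ j * t ^ 3 + SD.ν j * t ^ 4)) := by
    rw [hx_def, hd_def, ha_def, hb_def, hμ j, ← id1, ← id2]
    ring
  have hlamb := hclam j t htstar'
  have hxabs : |x| ≤ |clam| * c₀ ^ 2 * t := by
    rw [hxval, abs_mul, abs_of_pos hθpos]
    calc θ * |SD.lam j t - (SD.γ j * t ^ 2 + SD.μ j * t ^ 3 + SD.ν j * t ^ 4)|
        ≤ θ * (clam * |t| ^ 5) := mul_le_mul_of_nonneg_left hlamb hθpos.le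
      _ ≤ θ * (|clam| * t ^ 5) := by
          rw [htabs]
          exact mul_le_mul_of_nonneg_left
            (mul_le_mul_of_nonneg_right (le_abs_self clam) (by positivity)) hθpos.le
      _ = |clam| * (θ * t ^ 4) * t := by ring
      _ = |clam| * c₀ ^ 2 * t := by rw [id2]
  have hxle : |x| ≤ Real.pi / 3 := by
    have hM : (0:ℝ) < (|clam| + 1) * c₀ ^ 2 := by positivity
    have h3' : t * ((|clam| + 1) * c₀ ^ 2) < Real.pi / 3 := (lt_div_iff₀ hM).mp h3
    have step : |clam| * c₀ ^ 2 * t ≤ (|clam| + 1) * c₀ ^ 2 * t :=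
      mul_le_mul_of_nonneg_right
        (mul_le_mul_of_nonneg_right (by linarith [abs_nonneg clam]) (sq_nonneg c₀))
        htpos.le
    have heq2 : (|clam| + 1) * c₀ ^ 2 * t = t * ((|clam| + 1) * c₀ ^ 2) := by ring
    linarith [hxabs]
  have hcosx : 1/2 ≤ Real.cos x := by
    rw [← Real.cos_abs, ← Real.cos_pi_div_three]
    exact Real.cos_le_cos_of_nonneg_of_le_pi (abs_nonneg x)
      (by linarith [Real.pi_pos]) hxle
  have hνc : SD.ν j * c₀ ^ 2 = Real.pi ∨ SD.ν j * c₀ ^ 2 = -Real.pi := by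
    rw [hc₀sq]
    rcases hνj.lt_or_gt with hn | hp
    · right
      rw [abs_of_neg hn, div_neg, mul_neg, ← mul_div_assoc,
        mul_div_cancel_left₀ _ hνj]
    · left
      rw [abs_of_pos hp, ← mul_div_assoc, mul_div_cancel_left₀ _ hνj]
  have hcosd : Real.cos d = -Real.cos x := by
    have hdx : d = SD.ν j * c₀ ^ 2 + x := by rw [hx_def]; ring
    rcases hνc with hh | hh
    · rw [hdx, hh, Real.cos_add, Real.cos_pi, Real.sin_pi]; ring
    · rw [hdx, hh, Real.cos_add, Real.cos_neg, Real.sin_neg, Real.cos_pi,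
        Real.sin_pi]; ring
  have hd_cos : Real.cos d ≤ -(1/2) := by rw [hcosd]; linarith
  have habs2 : ‖Complex.exp (((-b : ℝ) : ℂ) * Complex.I)‖ = 1 :=
    Complex.norm_exp_ofReal_mul_I _
  have hre : (Complex.exp (((-d : ℝ) : ℂ) * Complex.I) - 1).re = Real.cos d - 1 := by
    rw [Complex.sub_re, Complex.one_re, Complex.exp_ofReal_mul_I_re, Real.cos_neg]
  set c1 : ℂ := Complex.exp (((-a : ℝ) : ℂ) * Complex.I) with hc1_def
  set c2 : ℂ := Complex.exp (((-b : ℝ) : ℂ) * Complex.I) with hc2_def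
  have habslow : 3/2 ≤ ‖c1 - c2‖ := by
    rw [hc1_def, hc2_def, hsplit, norm_mul, habs2, one_mul]
    have h1' : (3:ℝ)/2 ≤ |(Complex.exp (((-d : ℝ) : ℂ) * Complex.I) - 1).re| := by
      rw [hre, abs_of_nonpos (by linarith [Real.cos_le_one d])]
      linarith
    exact le_trans h1' (Complex.abs_re_le_norm _)
  -- the operator applied to w
  have hPω : S.P w = w := S.P_fix _ (SD.ω_mem j)
  set errv : S.H := c1 • (f - w) + S.E t θ (w - f) with herrv_def
  have hTapp : ((S.E t θ - NormedSpace.exp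
        (((-Complex.I) * ((θ * t ^ 2 : ℝ) : ℂ)) • S.germ)) ∘L S.P) w
      = (c1 - c2) • w + errv := by
    rw [ContinuousLinearMap.comp_apply, hPω, ContinuousLinearMap.sub_apply,
      hexpB, hc₂]
    have hsplitω : S.E t θ w = S.E t θ f + S.E t θ (w - f) := by
      rw [← map_add]; congr 1; abel
    rw [hsplitω, hE, hc₁, herrv_def, sub_smul, smul_sub]
    abel
  have herr : ‖errv‖ ≤ 2 * (|cφ| * t) := by
    have h1' := norm_add_le (c1 • (f - w)) (S.E t θ (w - f))
    have h2' : ‖c1 • (f - w)‖ = ‖f - w‖ := by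
      rw [norm_smul, hc1_def, Complex.norm_exp_ofReal_mul_I,
        one_mul]
    have h3' : ‖S.E t θ (w - f)‖ = ‖f - w‖ := by
      rw [S.E_isometry, norm_sub_rev]
    rw [herrv_def]
    calc ‖c1 • (f - w) + S.E t θ (w - f)‖
        ≤ ‖c1 • (f - w)‖ + ‖S.E t θ (w - f)‖ := h1'
      _ = ‖f - w‖ + ‖f - w‖ := by rw [h2', h3']
      _ ≤ 2 * (|cφ| * t) := by linarith [hφω]
  have htsmall : 2 * (|cφ| * t) ≤ 1/2 := by
    have hM : (0:ℝ) < 4 * (|cφ| + 1) := by positivity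
    rw [inv_eq_one_div] at h2
    have h2' : t * (4 * (|cφ| + 1)) < 1 := (lt_div_iff₀ hM).mp h2
    have heq2 : t * (4 * (|cφ| + 1)) = 4 * (|cφ| * t) + 4 * t := by ring
    linarith [htpos, mul_nonneg (abs_nonneg cφ) htpos.le]
  have hωlow : 1 ≤ ‖((S.E t θ - NormedSpace.exp
      (((-Complex.I) * ((θ * t ^ 2 : ℝ) : ℂ)) • S.germ)) ∘L S.P) w‖ := by
    rw [hTapp]
    have hnsmul : ‖(c1 - c2) • w‖ = ‖c1 - c2‖ := by
      rw [norm_smul, hωnorm, mul_one]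
    have h4' : ‖(c1 - c2) • w‖ - ‖errv‖ ≤ ‖(c1 - c2) • w + errv‖ := by
      have := norm_sub_norm_le ((c1 - c2) • w) (-errv)
      simpa [sub_neg_eq_add, norm_neg] using this
    rw [hnsmul] at h4'
    linarith [habslow, herr, htsmall]
  have hTnorm : 1 ≤ ‖(S.E t θ - NormedSpace.exp
      (((-Complex.I) * ((θ * t ^ 2 : ℝ) : ℂ)) • S.germ)) ∘L S.P‖ := by
    have h' := ContinuousLinearMap.le_opNorm ((S.E t θ - NormedSpace.exp
      (((-Complex.I) * ((θ * t ^ 2 : ℝ) : ℂ)) • S.germ)) ∘L S.P) w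
    rw [hωnorm, mul_one] at h'
    linarith [hωlow]
  -- apply the hypothesis at (τ, t, t)
  have hkey := hbound τ t t (by rwa [htabs]) htpos ht_ε₁
  rw [← hθ_def] at hkey
  have htpow : (0:ℝ) < t ^ s := Real.rpow_pos_of_pos htpos s
  have hratio : t ^ s / (t ^ 2 + t ^ 2) ^ (s / 2) = ((2:ℝ) ^ (s / 2))⁻¹ := by
    have hrw : (t ^ 2 + t ^ 2 : ℝ) = 2 * t ^ 2 := by ring
    have hpow2 : ((t ^ 2 : ℝ)) ^ (s / 2) = t ^ s := by
      rw [← Real.rpow_natCast t 2, ← Real.rpow_mul htpos.le]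
      congr 1
      push_cast
      ring
    rw [hrw, Real.mul_rpow (by norm_num : (0:ℝ) ≤ 2) (sq_nonneg t), hpow2,
      mul_comm ((2:ℝ) ^ (s/2)) (t ^ s), ← div_div, div_self htpow.ne', one_div]
  rw [hratio] at hkey
  have hTkey : ((2:ℝ) ^ (s/2))⁻¹ ≤ C τ * t :=
    le_trans (le_mul_of_one_le_left (inv_pos.mpr h2pos).le hTnorm) hkey
  have hCrt : C τ / Real.sqrt τ < q := by rwa [abs_of_pos hτpos] at h5
  have hlast : ((2:ℝ) ^ (s/2))⁻¹ < ((2:ℝ) ^ (s/2))⁻¹ := by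
    calc ((2:ℝ) ^ (s/2))⁻¹ ≤ C τ * t := hTkey
      _ = (C τ / Real.sqrt τ) * c₀ := by rw [ht_def]; ring
      _ < q * c₀ := mul_lt_mul_of_pos_right hCrt hc₀
      _ = ((2:ℝ) ^ (s/2))⁻¹ := by
          rw [hq_def, mul_inv, mul_assoc, inv_mul_cancel₀ hc₀.ne', mul_one]
  exact lt_irrefl _ hlast
end
end

section
/- Suppose N̂_{0,Q} ≠ 0. Let s ≥ 3. Then there does not exist a positive function C(τ) with lim_{τ→∞} C(τ)/|τ| = 0 such that ‖M e^{-iτε^{-2}A(t)} M^{-1} P̂ − M₀ e^{-iτε^{-2}t²M₀ŜM₀} M₀^{-1} P̂‖ · ε^{s}(t²+ε²)^{-s/2} ≤ C(τ)ε holds for all τ ∈ ℝ and all sufficiently small |t| and ε > 0. -/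
/-!
Birman–Suslina abstract operator-theoretic scheme.

`BSScheme` encodes: complex separable Hilbert spaces `H`, `Hs`; a densely defined
closed operator `X₀ : H → Hs`; a bounded operator `X₁`; the family
`X(t) = X₀ + t X₁` and the selfadjoint nonnegative operator family
`A(t) = X(t)* X(t)` (encoded through its quadratic form); the kernel
`𝔑 = Ker A(0) = Ker X₀` of finite dimension `n` with `n ≤ dim Ker X₀*`;
the orthogonal projections `P`, `P*` onto `𝔑` and `𝔑* = Ker X₀* = (Ran X₀)ᗮ`;
the spectral gap data `0 < 8δ < d⁰` (the point `0` is isolated in the spectrum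
of `A₀`); the operator `Z` (solving the weak problem `X₀*(X₀ ψ + X₁ ω) = 0`);
and the unitary group `E t τ = e^{-iτ A(t)}` generated by `A(t)`.
-/

noncomputable section

open ContinuousLinearMap

/-! The sandwiched scheme: a second family `Â(t) = X̂(t)* X̂(t)` in a Hilbert
space `Ĥ`, together with an isomorphism `M : H → Ĥ` with `M Dom X₀ = Dom X̂₀`
and `X(t) = X̂(t) M`, so that `A(t) = M* Â(t) M`.  `𝔑̂ = Ker Â₀ = M 𝔑` with
orthogonal projection `P̂`; `Ŝ` is the spectral germ of `Â(t)`;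
`Q = (M M*)⁻¹`; `M₀ = (Q_𝔑̂)^{-1/2}` (encoded by the relations
`P̂ Q M₀² P̂ = P̂` on `𝔑̂`, `M₀` selfadjoint, nonnegative, commuting with `P̂`,
with inverse `M₀⁻¹` on `𝔑̂`). -/
structure SandScheme extends BSScheme where
  Hh : Type
  [instHh₁ : NormedAddCommGroup Hh]
  [instHh₂ : InnerProductSpace ℂ Hh]
  [instHh₃ : CompleteSpace Hh]
  /-- densely defined closed operator `X̂₀` -/
  Xh₀ : Hh →ₗ.[ℂ] Hs
  Xh₀_dense : Dense (Xh₀.domain : Set Hh)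
  Xh₀_closed : IsClosed (Xh₀.graph : Set (Hh × Hs))
  /-- bounded operator `X̂₁` -/
  Xh₁ : Hh →L[ℂ] Hs
  /-- the isomorphism `M : H → Ĥ` -/
  Mm : H ≃L[ℂ] Hh
  dom_eq : ∀ u : H, u ∈ X₀.domain ↔ Mm u ∈ Xh₀.domain
  X₀_sand : ∀ u : X₀.domain, X₀ u = Xh₀ ⟨Mm u, (dom_eq u).1 u.2⟩
  X₁_sand : ∀ u : H, X₁ u = Xh₁ (Mm u)
  /-- `𝔑̂ = Ker X̂₀ = Ker Â₀` -/
  kerHat : Submodule ℂ Hh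
  kerHat_def : ∀ u : Hh, u ∈ kerHat ↔ ∃ hu : u ∈ Xh₀.domain, Xh₀ ⟨u, hu⟩ = 0
  /-- the orthogonal projection `P̂` onto `𝔑̂` -/
  Ph : Hh →L[ℂ] Hh
  Ph_mem : ∀ u, Ph u ∈ kerHat
  Ph_fix : ∀ u ∈ kerHat, Ph u = u
  Ph_sa : IsSelfAdjoint Ph
  /-- `M₀ = (Q_𝔑̂)^{-1/2}`, where `Q_𝔑̂ = P̂ Q|_𝔑̂` and `Q = (M M*)⁻¹` -/
  M₀ : Hh →L[ℂ] Hh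
  M₀inv : Hh →L[ℂ] Hh
  M₀_sa : IsSelfAdjoint M₀
  M₀_nonneg : ∀ u : Hh, 0 ≤ (inner ℂ (M₀ u) u : ℂ).re
  M₀_comm : M₀ ∘L Ph = Ph ∘L M₀
  M₀inv_comm : M₀inv ∘L Ph = Ph ∘L M₀inv
  M₀_sq : ∀ u : Hh,
    Ph ((ContinuousLinearMap.adjoint ((Mm.symm : Hh →L[ℂ] H)))
      ((Mm.symm : Hh →L[ℂ] H) (M₀ (M₀ (Ph u))))) = Ph u
  M₀_inv_left : ∀ u : Hh, M₀ (M₀inv (Ph u)) = Ph u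
  M₀_inv_right : ∀ u : Hh, M₀inv (M₀ (Ph u)) = Ph u

attribute [instance] SandScheme.instHh₁ SandScheme.instHh₂ SandScheme.instHh₃

namespace SandScheme

variable (S : SandScheme)

/-- `M` as a bounded operator -/
def Mcl : S.H →L[ℂ] S.Hh := (S.Mm : S.H →L[ℂ] S.Hh)

/-- `M⁻¹` as a bounded operator -/
def Minv : S.Hh →L[ℂ] S.H := (S.Mm.symm : S.Hh →L[ℂ] S.H)

/-- the spectral germ `Ŝ` of `Â(t)` (extended by zero, i.e. the operator `Ŝ P̂`);
here `P̂* = P*` is the orthogonal projection onto `𝔑̂* = 𝔑* = Ker X̂₀*` -/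
def germHat : S.Hh →L[ℂ] S.Hh :=
  S.Ph ∘L (ContinuousLinearMap.adjoint S.Xh₁) ∘L S.Pstar ∘L S.Xh₁ ∘L S.Ph

/-- the operator `N̂_Q = P̂ (M*)⁻¹ N M⁻¹ P̂` -/
def NhatQ : S.Hh →L[ℂ] S.Hh :=
  S.Ph ∘L (ContinuousLinearMap.adjoint S.Minv) ∘L S.Nop ∘L S.Minv ∘L S.Ph

end SandScheme

/-- the operator `N̂_{0,Q} = P̂ (M*)⁻¹ N₀ M⁻¹ P̂` -/
noncomputable def SandScheme.NhatQ0 (S : SandScheme) (SD : SpecData S.toBSScheme) :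
    S.Hh →L[ℂ] S.Hh :=
  S.Ph ∘L (ContinuousLinearMap.adjoint S.Minv) ∘L SD.N0op ∘L S.Minv ∘L S.Ph

open scoped ComplexConjugate

lemma eig_evolution (S : BSScheme) (t σ lam : ℝ) (φ : S.H) (hd : φ ∈ (S.A t).domain)
    (h : (S.A t) ⟨φ, hd⟩ = (lam : ℂ) • φ) :
    S.E t σ φ = Complex.exp ((-(σ * lam) : ℝ) * Complex.I) • φ := by
  set g : ℝ → S.H := fun s => Complex.exp (((s * lam : ℝ)) * Complex.I) • S.E t s φ with hg
  have hconst : ∀ s : ℝ, HasDerivAt g 0 s := by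
    intro s
    have h1 : HasDerivAt (fun s : ℝ => S.E t s φ)
        (-(Complex.I • (S.E t s ((S.A t) ⟨φ, hd⟩)))) s := S.E_gen t s ⟨φ, hd⟩
    rw [h] at h1
    have h1' : HasDerivAt (fun s : ℝ => S.E t s φ)
        ((-((lam : ℂ) * Complex.I)) • S.E t s φ) s := by
      convert h1 using 1
      rw [map_smul, smul_smul, mul_comm Complex.I, neg_smul]
    have h2c : HasDerivAt (fun z : ℂ => Complex.exp (z * ((lam : ℂ) * Complex.I)))
        (((lam : ℂ) * Complex.I) * Complex.exp (((s : ℂ)) * ((lam : ℂ) * Complex.I))) s := by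
      simpa [mul_comm] using ((hasDerivAt_mul_const ((lam : ℂ) * Complex.I)).cexp (x := (s : ℂ)))
    have h2 : HasDerivAt (fun y : ℝ => Complex.exp ((y : ℂ) * ((lam : ℂ) * Complex.I)))
        (((lam : ℂ) * Complex.I) * Complex.exp (((s : ℂ)) * ((lam : ℂ) * Complex.I))) s :=
      h2c.comp_ofReal
    have h2' : HasDerivAt (fun y : ℝ => Complex.exp (((y * lam : ℝ)) * Complex.I))
        (((lam : ℂ) * Complex.I) * Complex.exp (((s * lam : ℝ)) * Complex.I)) s := by
      convert h2 using 2 <;> push_cast <;> ring_nf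
    have := h2'.smul h1'
    convert this using 1
    · exact hg.trans rfl
    rw [smul_smul, ← add_smul,
      show Complex.exp (((s * lam : ℝ)) * Complex.I) * (-((lam : ℂ) * Complex.I))
        + ((lam : ℂ) * Complex.I) * Complex.exp (((s * lam : ℝ)) * Complex.I) = 0 by ring,
      zero_smul]
  have hdiff : Differentiable ℝ g := fun x => (hconst x).differentiableAt
  have hfd : ∀ x, fderiv ℝ g x = 0 := by
    intro x
    rw [(hconst x).hasFDerivAt.fderiv]
    ext
    simp
  have hcst := is_const_of_fderiv_eq_zero hdiff hfd σ 0
  have h0 : g 0 = φ := by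
    simp [hg, S.E_zero]
  rw [h0] at hcst
  have : Complex.exp ((-(σ * lam) : ℝ) * Complex.I) • g σ
      = Complex.exp ((-(σ * lam) : ℝ) * Complex.I) • φ := by rw [hcst]
  rw [hg] at this
  simpa [smul_smul, ← Complex.exp_add, show ((-(σ * lam) : ℝ) : ℂ) * Complex.I + ((σ * lam : ℝ)) * Complex.I = 0 by push_cast; ring] using this

lemma abs_exp_sub_exp (a b : ℝ) :
    ‖Complex.exp ((a:ℂ) * Complex.I) - Complex.exp ((b:ℂ) * Complex.I)‖
      = ‖Complex.exp (((a - b : ℝ):ℂ) * Complex.I) - 1‖ := by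
  have h : Complex.exp ((a:ℂ) * Complex.I) - Complex.exp ((b:ℂ) * Complex.I)
      = Complex.exp ((b:ℂ) * Complex.I) * (Complex.exp (((a - b : ℝ):ℂ) * Complex.I) - 1) := by
    rw [mul_sub, ← Complex.exp_add, mul_one]
    push_cast
    ring_nf
  rw [h, norm_mul, Complex.norm_exp_ofReal_mul_I, one_mul]

lemma one_le_abs_exp_sub_one (Δ : ℝ) (h1 : Real.pi/2 ≤ Δ) (h2 : Δ ≤ Real.pi + Real.pi/2) :
    1 ≤ ‖Complex.exp ((Δ:ℂ) * Complex.I) - 1‖ := by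
  have hcos : Real.cos Δ ≤ 0 := Real.cos_nonpos_of_pi_div_two_le_of_le h1 h2
  have hsq : (‖Complex.exp ((Δ:ℂ) * Complex.I) - 1‖)^2
      = (Real.cos Δ - 1)^2 + (Real.sin Δ)^2 := by
    rw [Complex.sq_norm, Complex.normSq_apply]
    simp [Complex.exp_ofReal_mul_I_re, Complex.exp_ofReal_mul_I_im]
    ring
  nlinarith [Real.sin_sq_add_cos_sq Δ,
    norm_nonneg (Complex.exp ((Δ:ℂ) * Complex.I) - 1)]

lemma alg1 (τ a b γ μ ν t : ℝ) (ht : t ≠ 0) :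
    -(τ * a / t^2) - -(τ * b / t^2) + 2 * μ * τ * t
      = -(τ/t^2) * ((a - (γ * t^2 + μ * t^3 + ν * t^4)) - (b - (γ * t^2 - μ * t^3 + ν * t^4))) := by
  field_simp
  ring

lemma alg2 (τ c' u : ℝ) (hu : u ≠ 0) : (τ/u^2) * (2 * c' * u^5) = 2 * c' * τ * u^3 := by
  field_simp

lemma alg3 (μ τ : ℝ) (hμ : μ ≠ 0) (hτ : τ ≠ 0) :
    2 * μ * τ * (-(Real.pi/(2 * μ * τ))) = -Real.pi := by
  field_simp

set_option maxHeartbeats 1600000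

/-- Suppose `N̂_{0,Q} ≠ 0` (equivalently, `μ_j ≠ 0` for some `j`).
Let `s ≥ 3`. Then there is no positive function `C(τ)` with
`lim_{τ→∞} C(τ)/|τ| = 0` such that
`‖M e^{-iτε⁻²A(t)} M⁻¹ P̂ − M₀ e^{-iτε⁻²t² M₀ Ŝ M₀} M₀⁻¹ P̂‖ εˢ(t²+ε²)^{-s/2}
  ≤ C(τ) ε` for all `τ ∈ ℝ` and all sufficiently small `|t|` and `ε > 0`. -/
theorem sandwiched_exp_time_sharp_general (S : SandScheme) (SD : SpecData S.toBSScheme)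
    (hN0Q : S.NhatQ0 SD ≠ 0) (s : ℝ) (hs : 3 ≤ s) :
    ¬ ∃ C : ℝ → ℝ, (∀ τ, 0 < C τ) ∧
        Filter.Tendsto (fun τ : ℝ => C τ / |τ|) Filter.atTop (nhds 0) ∧
        ∃ t₁ > (0 : ℝ), ∃ ε₁ > (0 : ℝ), ∀ τ t ε : ℝ,
          |t| ≤ t₁ → 0 < ε → ε ≤ ε₁ →
          ‖(S.Mcl ∘L S.E t (τ / ε ^ 2) ∘L S.Minv
              - S.M₀ ∘L NormedSpace.exp
                  (((-Complex.I) * ((τ / ε ^ 2 * t ^ 2 : ℝ) : ℂ))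
                    • (S.M₀ ∘L S.germHat ∘L S.M₀)) ∘L S.M₀inv)
              ∘L S.Ph‖ * (ε ^ s / (t ^ 2 + ε ^ 2) ^ (s / 2)) ≤ C τ * ε := by
  rintro ⟨C, hCpos, hClim, t₁, ht₁, ε₁, hε₁, hbound⟩
  classical
  -- a coordinate with nonzero μ
  obtain ⟨j, hμ0⟩ : ∃ j, SD.μ j ≠ 0 := by
    by_contra hall
    push_neg at hall
    apply hN0Q
    have h0 : SD.N0op = 0 := by
      simp [SpecData.N0op, hall]
    ext u
    simp [SandScheme.NhatQ0, h0]
  obtain ⟨c, hc⟩ := SD.φ_expansion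
  obtain ⟨c', hc'⟩ := SD.lam_expansion
  have htstabs : |SD.tstar| = SD.tstar := abs_of_pos SD.tstar_pos
  have hcnn : 0 ≤ c := by
    have h := hc j SD.tstar (le_of_eq htstabs)
    rw [htstabs] at h
    nlinarith [norm_nonneg (SD.φ j SD.tstar - SD.ω j), SD.tstar_pos]
  have hc'nn : 0 ≤ c' := by
    have h := hc' j SD.tstar (le_of_eq htstabs)
    rw [htstabs] at h
    nlinarith [abs_nonneg (SD.lam j SD.tstar - (SD.γ j * SD.tstar ^ 2 + SD.μ j * SD.tstar ^ 3
      + SD.ν j * SD.tstar ^ 4)), pow_pos SD.tstar_pos 5]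
  -- the test vector
  set v : S.Hh := S.Mcl (SD.ω j) with hvdef
  have hω_unit : ‖SD.ω j‖ = 1 := SD.ω_orthonormal.1 j
  have hωne : SD.ω j ≠ 0 := by
    intro h
    rw [h, norm_zero] at hω_unit
    norm_num at hω_unit
  have hvne : v ≠ 0 := by
    rw [hvdef]
    simp only [SandScheme.Mcl, ContinuousLinearEquiv.coe_coe]
    intro h
    exact hωne (S.Mm.injective (by simpa using h))
  have hvpos : 0 < ‖v‖ := norm_pos_iff.mpr hvne
  have hPhv : S.Ph v = v := by
    obtain ⟨hu, hX0⟩ := (S.ker_def (SD.ω j)).mp (SD.ω_mem j)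
    have hker : S.Mm (SD.ω j) ∈ S.kerHat := by
      rw [S.kerHat_def]
      refine ⟨(S.dom_eq _).1 hu, ?_⟩
      have hsand := S.X₀_sand ⟨SD.ω j, hu⟩
      rw [hX0] at hsand
      exact hsand.symm
    apply S.Ph_fix
    rw [hvdef]
    simpa [SandScheme.Mcl] using hker
  set t₂ : ℝ := min (min t₁ ε₁) SD.tstar with ht₂def
  have ht₂pos : 0 < t₂ := lt_min (lt_min ht₁ hε₁) SD.tstar_pos
  -- the key estimate
  have est : ∀ τ t : ℝ, t ≠ 0 → |t| ≤ t₂ →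
      ‖Complex.exp (((-(τ * SD.lam j t / t ^ 2) : ℝ) : ℂ) * Complex.I) • v
        - (S.M₀ ∘L NormedSpace.exp (((-Complex.I) * (τ : ℂ))
            • (S.M₀ ∘L S.germHat ∘L S.M₀)) ∘L S.M₀inv) v‖
      ≤ C τ * |t| * (2:ℝ) ^ (s/2) * ‖v‖ + 2 * ‖S.Mcl‖ * c * |t| := by
    intro τ t ht0 ht2
    have htpos : 0 < |t| := abs_pos.mpr ht0
    have ht1 : |t| ≤ t₁ := le_trans ht2 (le_trans (min_le_left _ _) (min_le_left _ _))
    have hε1 : |t| ≤ ε₁ := le_trans ht2 (le_trans (min_le_left _ _) (min_le_right _ _))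
    have htst : |t| ≤ SD.tstar := le_trans ht2 (min_le_right _ _)
    have hb := hbound τ t |t| ht1 htpos hε1
    have hsq : |t| ^ 2 = t ^ 2 := sq_abs t
    have hcoef : ((τ / |t| ^ 2 * t ^ 2 : ℝ) : ℂ) = (τ : ℂ) := by
      congr 1
      rw [hsq]
      field_simp
    rw [hcoef] at hb
    have h2pos : (0:ℝ) < (2:ℝ) ^ (s/2) := Real.rpow_pos_of_pos two_pos _
    have htspos : (0:ℝ) < |t| ^ s := Real.rpow_pos_of_pos htpos s
    have hfac : |t| ^ s / (t ^ 2 + |t| ^ 2) ^ (s/2) = ((2:ℝ) ^ (s/2))⁻¹ := by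
      have h2t : t ^ 2 + |t| ^ 2 = 2 * |t| ^ 2 := by rw [← hsq]; ring
      have hcast : ((2:ℕ):ℝ) * (s/2) = s := by push_cast; ring
      rw [h2t, Real.mul_rpow (by norm_num) (by positivity),
        ← Real.rpow_natCast |t| 2, ← Real.rpow_mul (abs_nonneg t), hcast,
        mul_comm, div_mul_eq_div_div, div_self htspos.ne', one_div]
    rw [hfac] at hb
    have hD : ∀ T : S.Hh →L[ℂ] S.Hh, ‖T‖ * ((2:ℝ)^(s/2))⁻¹ ≤ C τ * |t| →
        ‖T‖ ≤ C τ * |t| * (2:ℝ)^(s/2) := by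
      intro T hT
      calc ‖T‖ = ‖T‖ * ((2:ℝ)^(s/2))⁻¹ * (2:ℝ)^(s/2) := by field_simp
        _ ≤ C τ * |t| * (2:ℝ)^(s/2) := mul_le_mul_of_nonneg_right hT h2pos.le
    have hD' := hD _ hb
    have happ := le_trans (ContinuousLinearMap.le_opNorm _ v)
      (mul_le_mul_of_nonneg_right hD' (norm_nonneg v))
    -- compute the application
    have hMinv : S.Minv v = SD.ω j := by
      rw [hvdef]
      simp [SandScheme.Minv, SandScheme.Mcl]
    have hTv : ((S.Mcl ∘L S.E t (τ / |t| ^ 2) ∘L S.Minv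
          - S.M₀ ∘L NormedSpace.exp (((-Complex.I) * (τ : ℂ))
            • (S.M₀ ∘L S.germHat ∘L S.M₀)) ∘L S.M₀inv) ∘L S.Ph) v
        = S.Mcl (S.E t (τ / |t| ^ 2) (SD.ω j))
          - (S.M₀ ∘L NormedSpace.exp (((-Complex.I) * (τ : ℂ))
            • (S.M₀ ∘L S.germHat ∘L S.M₀)) ∘L S.M₀inv) v := by
      rw [ContinuousLinearMap.comp_apply, hPhv, ContinuousLinearMap.sub_apply,
        ContinuousLinearMap.comp_apply, ContinuousLinearMap.comp_apply, hMinv]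
    rw [hTv] at happ
    -- eigenvector evolution
    obtain ⟨hdm, heig⟩ := SD.φ_eig j t htst
    have hev := eig_evolution S.toBSScheme t (τ / |t| ^ 2) (SD.lam j t) (SD.φ j t) hdm heig
    have hθ : (-(τ / |t| ^ 2 * SD.lam j t) : ℝ) = -(τ * SD.lam j t / t ^ 2) := by
      rw [← hsq]; ring
    rw [hθ] at hev
    have hsplit : S.E t (τ / |t| ^ 2) (SD.ω j)
        = Complex.exp (((-(τ * SD.lam j t / t ^ 2) : ℝ) : ℂ) * Complex.I) • SD.φ j t
          + S.E t (τ / |t| ^ 2) (SD.ω j - SD.φ j t) := by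
      rw [map_sub, hev]
      abel
    have key1 : ‖S.Mcl (S.E t (τ / |t| ^ 2) (SD.ω j))
        - Complex.exp (((-(τ * SD.lam j t / t ^ 2) : ℝ) : ℂ) * Complex.I) • v‖
        ≤ 2 * ‖S.Mcl‖ * c * |t| := by
      rw [hsplit, map_add, map_smul, hvdef]
      have heq : Complex.exp (((-(τ * SD.lam j t / t ^ 2) : ℝ) : ℂ) * Complex.I) • S.Mcl (SD.φ j t)
            + S.Mcl (S.E t (τ / |t| ^ 2) (SD.ω j - SD.φ j t))
            - Complex.exp (((-(τ * SD.lam j t / t ^ 2) : ℝ) : ℂ) * Complex.I) • S.Mcl (SD.ω j)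
          = Complex.exp (((-(τ * SD.lam j t / t ^ 2) : ℝ) : ℂ) * Complex.I)
              • (S.Mcl (SD.φ j t) - S.Mcl (SD.ω j))
            + S.Mcl (S.E t (τ / |t| ^ 2) (SD.ω j - SD.φ j t)) := by
        rw [smul_sub]; abel
      rw [heq]
      have hb1 : ‖Complex.exp (((-(τ * SD.lam j t / t ^ 2) : ℝ) : ℂ) * Complex.I)
          • (S.Mcl (SD.φ j t) - S.Mcl (SD.ω j))‖ ≤ ‖S.Mcl‖ * (c * |t|) := by
        rw [norm_smul, Complex.norm_exp_ofReal_mul_I, one_mul, ← map_sub]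
        exact le_trans (S.Mcl.le_opNorm _)
          (mul_le_mul_of_nonneg_left (hc j t htst) (norm_nonneg _))
      have hb2 : ‖S.Mcl (S.E t (τ / |t| ^ 2) (SD.ω j - SD.φ j t))‖ ≤ ‖S.Mcl‖ * (c * |t|) := by
        refine le_trans (S.Mcl.le_opNorm _) (mul_le_mul_of_nonneg_left ?_ (norm_nonneg _))
        rw [S.E_isometry, norm_sub_rev]
        exact hc j t htst
      calc ‖_ + _‖ ≤ ‖S.Mcl‖ * (c * |t|) + ‖S.Mcl‖ * (c * |t|) :=
            le_trans (norm_add_le _ _) (add_le_add hb1 hb2)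
        _ = 2 * ‖S.Mcl‖ * c * |t| := by ring
    calc ‖Complex.exp (((-(τ * SD.lam j t / t ^ 2) : ℝ) : ℂ) * Complex.I) • v
          - (S.M₀ ∘L NormedSpace.exp (((-Complex.I) * (τ : ℂ))
              • (S.M₀ ∘L S.germHat ∘L S.M₀)) ∘L S.M₀inv) v‖
        ≤ ‖Complex.exp (((-(τ * SD.lam j t / t ^ 2) : ℝ) : ℂ) * Complex.I) • v
            - S.Mcl (S.E t (τ / |t| ^ 2) (SD.ω j))‖
          + ‖S.Mcl (S.E t (τ / |t| ^ 2) (SD.ω j))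
            - (S.M₀ ∘L NormedSpace.exp (((-Complex.I) * (τ : ℂ))
              • (S.M₀ ∘L S.germHat ∘L S.M₀)) ∘L S.M₀inv) v‖ := norm_sub_le_norm_sub_add_norm_sub _ _ _
      _ ≤ 2 * ‖S.Mcl‖ * c * |t| + C τ * |t| * (2:ℝ)^(s/2) * ‖v‖ := by
          rw [norm_sub_rev]
          exact add_le_add key1 happ
      _ = C τ * |t| * (2:ℝ)^(s/2) * ‖v‖ + 2 * ‖S.Mcl‖ * c * |t| := by ring
    -- choose τ large and t = -π/(2μτ)
  clear hbound
  clear_value v t₂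
  set μ : ℝ := SD.μ j with hμdef
  have hμpos : 0 < |μ| := abs_pos.mpr hμ0
  have hπ := Real.pi_pos
  have ev1 : ∀ᶠ τ : ℝ in Filter.atTop, (1:ℝ) ≤ τ := Filter.eventually_ge_atTop 1
  have hfun : ∀ τ : ℝ, Real.pi/(2 * |μ| * τ) = (Real.pi/(2 * |μ|)) * τ⁻¹ := by
    intro τ
    rw [← div_div, div_eq_mul_inv]
  have tend0 : Filter.Tendsto (fun τ : ℝ => Real.pi/(2 * |μ| * τ)) Filter.atTop (nhds 0) := by
    have h := tendsto_inv_atTop_zero.const_mul (Real.pi/(2 * |μ|))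
    rw [mul_zero] at h
    exact h.congr (fun τ => (hfun τ).symm)
  have ev2 : ∀ᶠ τ : ℝ in Filter.atTop, Real.pi/(2 * |μ| * τ) ≤ t₂ :=
    tend0.eventually_le_const ht₂pos
  have ev3 : ∀ᶠ τ : ℝ in Filter.atTop, 2 * c' * τ * (Real.pi/(2 * |μ| * τ))^3 ≤ Real.pi/2 := by
    have hA : Filter.Tendsto (fun τ : ℝ => (2 * c' * (Real.pi/(2 * |μ|))^3) * τ⁻¹)
        Filter.atTop (nhds 0) := by
      have h := tendsto_inv_atTop_zero.const_mul (2 * c' * (Real.pi/(2 * |μ|))^3)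
      rwa [mul_zero] at h
    have evA := hA.eventually_le_const (by positivity : (0:ℝ) < Real.pi/2)
    filter_upwards [ev1, evA] with τ h1 hAτ
    have hτpos : (0:ℝ) < τ := lt_of_lt_of_le one_pos h1
    have hid : 2 * c' * τ * (Real.pi/(2 * |μ| * τ))^3
        = ((2 * c' * (Real.pi/(2 * |μ|))^3) * τ⁻¹) * τ⁻¹ := by
      field_simp
    have hle : ((2 * c' * (Real.pi/(2 * |μ|))^3) * τ⁻¹) * τ⁻¹ ≤ ((2 * c' * (Real.pi/(2 * |μ|))^3) * τ⁻¹) * 1 := by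
      have h1' : τ⁻¹ ≤ 1 := by
        rw [inv_le_one_iff₀]
        right
        exact h1
      have hnn : 0 ≤ (2 * c' * (Real.pi/(2 * |μ|))^3) * τ⁻¹ := by positivity
      exact mul_le_mul_of_nonneg_left h1' hnn
    rw [hid]
    calc ((2 * c' * (Real.pi/(2 * |μ|))^3) * τ⁻¹) * τ⁻¹
        ≤ ((2 * c' * (Real.pi/(2 * |μ|))^3) * τ⁻¹) * 1 := hle
      _ = (2 * c' * (Real.pi/(2 * |μ|))^3) * τ⁻¹ := mul_one _
      _ ≤ Real.pi/2 := hAτ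
  have ev4 : ∀ᶠ τ : ℝ in Filter.atTop,
      2 * (C τ * (Real.pi/(2 * |μ| * τ)) * (2:ℝ)^(s/2) * ‖v‖)
        + 2 * (2 * ‖S.Mcl‖ * c * (Real.pi/(2 * |μ| * τ))) < ‖v‖ := by
    have hg : Filter.Tendsto (fun τ : ℝ =>
        (2 * (2:ℝ)^(s/2) * ‖v‖ * (Real.pi/(2 * |μ|))) * (C τ / |τ|)
          + (4 * ‖S.Mcl‖ * c * (Real.pi/(2 * |μ|))) * τ⁻¹) Filter.atTop (nhds 0) := by
      have h1 := hClim.const_mul (2 * (2:ℝ)^(s/2) * ‖v‖ * (Real.pi/(2 * |μ|)))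
      have h2 := tendsto_inv_atTop_zero.const_mul (4 * ‖S.Mcl‖ * c * (Real.pi/(2 * |μ|)))
      have := h1.add h2
      simpa using this
    have evB := hg.eventually_lt_const hvpos
    filter_upwards [ev1, evB] with τ h1 hB
    have hτpos : (0:ℝ) < τ := lt_of_lt_of_le one_pos h1
    have habs : |τ| = τ := abs_of_pos hτpos
    have hid : 2 * (C τ * (Real.pi/(2 * |μ| * τ)) * (2:ℝ)^(s/2) * ‖v‖)
          + 2 * (2 * ‖S.Mcl‖ * c * (Real.pi/(2 * |μ| * τ)))
        = (2 * (2:ℝ)^(s/2) * ‖v‖ * (Real.pi/(2 * |μ|))) * (C τ / |τ|)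
          + (4 * ‖S.Mcl‖ * c * (Real.pi/(2 * |μ|))) * τ⁻¹ := by
      rw [habs]
      field_simp
      ring
    rw [hid]
    exact hB
  obtain ⟨τ, h1, h2, h3, h4⟩ := (ev1.and (ev2.and (ev3.and ev4))).exists
  have hτpos : (0:ℝ) < τ := lt_of_lt_of_le one_pos h1
  have habsτ : |τ| = τ := abs_of_pos hτpos
  set t : ℝ := -(Real.pi/(2 * μ * τ)) with htdef
  clear_value t
  have hμτ : 2 * μ * τ ≠ 0 := mul_ne_zero (mul_ne_zero two_ne_zero hμ0) hτpos.ne'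
  have ht0 : t ≠ 0 := by
    rw [htdef, neg_ne_zero]
    exact div_ne_zero hπ.ne' hμτ
  have habs_t : |t| = Real.pi/(2 * |μ| * τ) := by
    rw [htdef, abs_neg, abs_div, abs_of_pos hπ, abs_mul, abs_mul, abs_two, abs_of_pos hτpos]
  have ht2 : |t| ≤ t₂ := by rw [habs_t]; exact h2
  have htst : |t| ≤ SD.tstar := le_trans ht2 (ht₂def ▸ min_le_right _ _)
  have htpos : 0 < |t| := abs_pos.mpr ht0
  have hsq : |t| ^ 2 = t ^ 2 := sq_abs t
  have e1 := est τ t ht0 ht2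
  have e2 := est τ (-t) (neg_ne_zero.mpr ht0) (by rwa [abs_neg])
  rw [neg_sq, abs_neg] at e2
  set θp : ℝ := -(τ * SD.lam j t / t ^ 2) with hθp
  set θm : ℝ := -(τ * SD.lam j (-t) / t ^ 2) with hθm
  clear_value θp θm
  -- phase separation
  have hph : |θp - θm + 2 * μ * τ * t| ≤ 2 * c' * τ * |t| ^ 3 := by
    have hp5 := hc' j t htst
    have hm5 := hc' j (-t) (by rwa [abs_neg])
    rw [abs_neg] at hm5
    have hrw : SD.γ j * (-t)^2 + SD.μ j * (-t)^3 + SD.ν j * (-t)^4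
        = SD.γ j * t^2 - μ * t^3 + SD.ν j * t^4 := by
      rw [← hμdef]; ring
    rw [hrw] at hm5
    have hkey : θp - θm + 2 * μ * τ * t
        = -(τ/t^2) * ((SD.lam j t - (SD.γ j * t^2 + SD.μ j * t^3 + SD.ν j * t^4))
            - (SD.lam j (-t) - (SD.γ j * t^2 - μ * t^3 + SD.ν j * t^4))) := by
      rw [hθp, hθm, ← hμdef]
      exact alg1 τ (SD.lam j t) (SD.lam j (-t)) (SD.γ j) μ (SD.ν j) t ht0
    rw [hkey, abs_mul, abs_neg, abs_of_pos (div_pos hτpos (by positivity))]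
    have htri : |(SD.lam j t - (SD.γ j * t^2 + SD.μ j * t^3 + SD.ν j * t^4))
        - (SD.lam j (-t) - (SD.γ j * t^2 - μ * t^3 + SD.ν j * t^4))| ≤ 2 * c' * |t| ^ 5 := by
      have htri0 := abs_sub (SD.lam j t - (SD.γ j * t^2 + SD.μ j * t^3 + SD.ν j * t^4))
        (SD.lam j (-t) - (SD.γ j * t^2 - μ * t^3 + SD.ν j * t^4))
      linarith only [hp5, hm5, htri0]
    calc (τ/t^2) * |(SD.lam j t - (SD.γ j * t^2 + SD.μ j * t^3 + SD.ν j * t^4))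
          - (SD.lam j (-t) - (SD.γ j * t^2 - μ * t^3 + SD.ν j * t^4))|
        ≤ (τ/t^2) * (2 * c' * |t| ^ 5) :=
          mul_le_mul_of_nonneg_left htri (le_of_lt (div_pos hτpos (by positivity)))
      _ = 2 * c' * τ * |t| ^ 3 := by
          rw [← hsq]
          exact alg2 τ c' |t| htpos.ne'
  have hπt : 2 * μ * τ * t = -Real.pi := by
    rw [htdef]
    exact alg3 μ τ hμ0 hτpos.ne'
  rw [hπt] at hph
  have hΔ : |θp - θm - Real.pi| ≤ Real.pi/2 := by
    have h3' : 2 * c' * τ * |t| ^ 3 ≤ Real.pi/2 := by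
      rw [habs_t]
      exact h3
    calc |θp - θm - Real.pi| = |θp - θm + -Real.pi| := by rw [sub_eq_add_neg]
      _ ≤ 2 * c' * τ * |t| ^ 3 := hph
      _ ≤ Real.pi/2 := h3'
  have hone : 1 ≤ ‖Complex.exp ((θp:ℂ) * Complex.I)
      - Complex.exp ((θm:ℂ) * Complex.I)‖ := by
    rw [abs_exp_sub_exp]
    apply one_le_abs_exp_sub_one
    · linarith only [(abs_le.mp hΔ).1]
    · linarith only [(abs_le.mp hΔ).2]
  -- combine
  have tri : ‖(Complex.exp ((θp:ℂ) * Complex.I) - Complex.exp ((θm:ℂ) * Complex.I)) • v‖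
      ≤ (C τ * |t| * (2:ℝ)^(s/2) * ‖v‖ + 2 * ‖S.Mcl‖ * c * |t|)
        + (C τ * |t| * (2:ℝ)^(s/2) * ‖v‖ + 2 * ‖S.Mcl‖ * c * |t|) := by
    rw [sub_smul]
    have hsplit : Complex.exp ((θp:ℂ) * Complex.I) • v - Complex.exp ((θm:ℂ) * Complex.I) • v
        = (Complex.exp ((θp:ℂ) * Complex.I) • v
            - (S.M₀ ∘L NormedSpace.exp (((-Complex.I) * (τ : ℂ))
                • (S.M₀ ∘L S.germHat ∘L S.M₀)) ∘L S.M₀inv) v)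
          - (Complex.exp ((θm:ℂ) * Complex.I) • v
            - (S.M₀ ∘L NormedSpace.exp (((-Complex.I) * (τ : ℂ))
                • (S.M₀ ∘L S.germHat ∘L S.M₀)) ∘L S.M₀inv) v) := by
      abel
    rw [hsplit]
    exact le_trans (norm_sub_le _ _) (add_le_add e1 e2)
  have hlow : ‖v‖ ≤ ‖(Complex.exp ((θp:ℂ) * Complex.I)
      - Complex.exp ((θm:ℂ) * Complex.I)) • v‖ := by
    rw [norm_smul]
    exact le_mul_of_one_le_left (norm_nonneg v) hone
  rw [habs_t] at tri
  linarith only [tri, hlow, h4]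
end
end

section
/- Assume the nondegeneracy condition A(t) ≥ c* t² I for |t| ≤ t⁰ (c* > 0). Suppose N̂_{0,Q} = 0 and 𝒩̂_Q^{(q)} ≠ 0 for some q ∈ {1,…,p}, i.e., in the eigenvalue expansions λ_l(t) = γ_l t² + μ_l t³ + ν_l t⁴ + … of A(t) one has μ_l = 0 for all l while ν_j ≠ 0 for some j. Let s ≥ 2. Then there does not exist a positive function C(τ) with lim_{τ→∞} C(τ)/|τ|^{1/2} = 0 such that ‖M e^{-iτε^{-2}A(t)} M^{-1} P̂ − M₀ e^{-iτε^{-2}t²M₀ŜM₀} M₀^{-1} P̂‖ · ε^{s}(t²+ε²)^{-s/2} ≤ C(τ)ε holds for all τ ∈ ℝ and all sufficiently small |t| and ε > 0. -/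
/-!
Birman–Suslina abstract operator-theoretic scheme.

`BSScheme` encodes: complex separable Hilbert spaces `H`, `Hs`; a densely defined
closed operator `X₀ : H → Hs`; a bounded operator `X₁`; the family
`X(t) = X₀ + t X₁` and the selfadjoint nonnegative operator family
`A(t) = X(t)* X(t)` (encoded through its quadratic form); the kernel
`𝔑 = Ker A(0) = Ker X₀` of finite dimension `n` with `n ≤ dim Ker X₀*`;
the orthogonal projections `P`, `P*` onto `𝔑` and `𝔑* = Ker X₀* = (Ran X₀)ᗮ`;
the spectral gap data `0 < 8δ < d⁰` (the point `0` is isolated in the spectrum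
of `A₀`); the operator `Z` (solving the weak problem `X₀*(X₀ ψ + X₁ ω) = 0`);
and the unitary group `E t τ = e^{-iτ A(t)}` generated by `A(t)`.
-/

noncomputable section

open ContinuousLinearMap

section ExpEigen
variable {H : Type} [NormedAddCommGroup H] [InnerProductSpace ℂ H] [CompleteSpace H]

lemma pow_apply_eigen (B : H →L[ℂ] H) (x : H) (a : ℂ) (h : B x = a • x) (n : ℕ) :
    (B ^ n) x = a ^ n • x := by
  induction n with
  | zero => simp
  | succ n ih =>
    rw [pow_succ, ContinuousLinearMap.mul_apply, h, map_smul, ih, smul_smul, pow_succ]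
    ring_nf

lemma exp_apply_eigen (B : H →L[ℂ] H) (x : H) (a : ℂ) (h : B x = a • x) :
    NormedSpace.exp B x = Complex.exp a • x := by
  have hsum : Summable fun n : ℕ => ((n.factorial : ℂ))⁻¹ • B ^ n :=
    NormedSpace.expSeries_summable' (𝕂 := ℂ) B
  have h1 : NormedSpace.exp B x
      = ∑' n : ℕ, (((n.factorial : ℂ))⁻¹ • B ^ n) x := by
    rw [NormedSpace.exp_eq_tsum (𝕂 := ℂ)]
    exact ((ContinuousLinearMap.apply ℂ H x).map_tsum hsum)
  rw [h1]
  have h2 : ∀ n : ℕ, (((n.factorial : ℂ))⁻¹ • B ^ n) x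
      = (((n.factorial : ℂ))⁻¹ * a ^ n) • x := by
    intro n
    rw [ContinuousLinearMap.smul_apply, pow_apply_eigen B x a h, smul_smul]
  rw [tsum_congr h2]
  have hsum2 : Summable fun n : ℕ => ((n.factorial : ℂ))⁻¹ * a ^ n := by
    simpa [smul_eq_mul] using NormedSpace.expSeries_summable' (𝕂 := ℂ) a
  rw [hsum2.tsum_smul_const]
  congr 1
  rw [Complex.exp_eq_exp_ℂ, NormedSpace.exp_eq_tsum (𝕂 := ℂ)]
  simp [smul_eq_mul]

end ExpEigen

namespace BSScheme
variable (S : BSScheme)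

lemma E_eigen (t θ lam : ℝ) (φ : S.H) (hd : φ ∈ (S.A t).domain)
    (hφ : (S.A t) ⟨φ, hd⟩ = (lam : ℂ) • φ) :
    S.E t θ φ = Complex.exp (-(Complex.I * lam * θ)) • φ := by
  set c : ℂ := Complex.I * lam with hc
  have hg : ∀ σ : ℝ, HasDerivAt (fun s : ℝ => S.E t s φ) ((-c) • S.E t σ φ) σ := by
    intro σ
    have h := S.E_gen t σ ⟨φ, hd⟩
    simp only [hφ, map_smul] at h
    have h2 : (-c) • S.E t σ φ = -(Complex.I • ((lam : ℂ) • S.E t σ φ)) := by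
      rw [smul_smul, neg_smul, hc]
    rw [h2]; exact h
  have hf : ∀ σ : ℝ, HasDerivAt (fun s : ℝ => Complex.exp (c * s)) (Complex.exp (c * σ) * c) σ := by
    intro σ
    have h0 : HasDerivAt (fun s : ℝ => (s : ℂ)) 1 σ := by
      simpa using (hasDerivAt_id σ).ofReal_comp
    have h1 : HasDerivAt (fun s : ℝ => c * (s : ℂ)) (c * 1) σ := h0.const_mul c
    simpa using h1.cexp
  have hh : ∀ σ : ℝ, HasDerivAt (fun s : ℝ => Complex.exp (c * s) • S.E t s φ) 0 σ := by
    intro σ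
    have h := (hf σ).smul (hg σ)
    convert h using 1
    · rfl
    rw [smul_smul, ← add_smul]
    rw [show Complex.exp (c * σ) * -c + Complex.exp (c * σ) * c = 0 by ring, zero_smul]
  have hconst : ∀ x y : ℝ, (fun s : ℝ => Complex.exp (c * s) • S.E t s φ) x
      = (fun s : ℝ => Complex.exp (c * s) • S.E t s φ) y := by
    apply is_const_of_deriv_eq_zero
    · intro x; exact (hh x).differentiableAt
    · intro x; exact (hh x).deriv
  have h0 : Complex.exp (c * θ) • S.E t θ φ = φ := by
    have h := hconst θ 0
    simpa [S.E_zero] using h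
  have hfinal : S.E t θ φ = Complex.exp (-(c * θ)) • φ := by
    calc S.E t θ φ = Complex.exp (-(c * θ)) • (Complex.exp (c * θ) • S.E t θ φ) := by
          rw [smul_smul, ← Complex.exp_add]; simp
      _ = Complex.exp (-(c * θ)) • φ := by rw [h0]
  exact hfinal

end BSScheme

namespace SandScheme
variable (S : SandScheme)

lemma mcl_mem_kerHat {u : S.H} (hu : u ∈ S.ker) : S.Mcl u ∈ S.kerHat := by
  obtain ⟨hd, h0⟩ := (S.ker_def u).1 hu
  refine (S.kerHat_def _).2 ⟨(S.dom_eq u).1 hd, ?_⟩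
  have h := S.X₀_sand ⟨u, hd⟩
  simp only [SandScheme.Mcl, ContinuousLinearEquiv.coe_coe]
  rw [← h]
  exact h0

lemma symm_mem_ker {u : S.Hh} (hu : u ∈ S.kerHat) : S.Mm.symm u ∈ S.ker := by
  obtain ⟨hd, h0⟩ := (S.kerHat_def u).1 hu
  have hd' : S.Mm.symm u ∈ S.X₀.domain := by
    rw [S.dom_eq]
    rw [S.Mm.apply_symm_apply]
    exact hd
  refine (S.ker_def _).2 ⟨hd', ?_⟩
  have h := S.X₀_sand ⟨S.Mm.symm u, hd'⟩
  rw [h]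
  have he : (⟨S.Mm (S.Mm.symm u), (S.dom_eq _).1 hd'⟩ : S.Xh₀.domain) = ⟨u, hd⟩ :=
    Subtype.ext (S.Mm.apply_symm_apply u)
  rw [he]
  exact h0

lemma Ph_idem (x : S.Hh) : S.Ph (S.Ph x) = S.Ph x := S.Ph_fix _ (S.Ph_mem x)

lemma Ph_inner (x : S.Hh) {ζ : S.Hh} (hζ : ζ ∈ S.kerHat) :
    (inner ℂ (S.Ph x) ζ : ℂ) = inner ℂ x ζ := by
  have hsa : ContinuousLinearMap.adjoint S.Ph = S.Ph := S.Ph_sa.adjoint_eq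
  rw [← hsa, ContinuousLinearMap.adjoint_inner_left, S.Ph_fix ζ hζ]

lemma P_inner (x : S.H) {ζ : S.H} (hζ : ζ ∈ S.ker) :
    (inner ℂ (S.P x) ζ : ℂ) = inner ℂ x ζ := by
  have hsa : ContinuousLinearMap.adjoint S.P = S.P := S.P_sa.adjoint_eq
  rw [← hsa, ContinuousLinearMap.adjoint_inner_left, S.P_fix ζ hζ]

lemma germHat_eigen (SD : SpecData S.toBSScheme) (j : Fin S.n) :
    S.germHat (S.Mcl (SD.ω j)) =
      (SD.γ j : ℂ) • S.Ph ((ContinuousLinearMap.adjoint S.Minv) (S.Minv (S.Mcl (SD.ω j)))) := by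
  set ω := SD.ω j with hωdef
  have hω : ω ∈ S.ker := SD.ω_mem j
  set x := S.Mcl ω with hxdef
  have hx : x ∈ S.kerHat := S.mcl_mem_kerHat hω
  have hPhx : S.Ph x = x := S.Ph_fix x hx
  -- the key pairing identity
  have claim : ∀ ζ, ζ ∈ S.kerHat →
      (inner ℂ (S.germHat x - (SD.γ j : ℂ) • S.Ph
        ((ContinuousLinearMap.adjoint S.Minv) (S.Minv x))) ζ : ℂ) = 0 := by
    intro ζ hζ
    set ω' := S.Mm.symm ζ with hω'def
    have hω' : ω' ∈ S.ker := S.symm_mem_ker hζ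
    have hζω' : S.Mcl ω' = ζ := S.Mm.apply_symm_apply ζ
    have hL : (inner ℂ (S.germHat x) ζ : ℂ) = inner ℂ (S.Pstar (S.Xh₁ x)) (S.Xh₁ ζ) := by
      simp only [SandScheme.germHat, ContinuousLinearMap.comp_apply, hPhx]
      rw [S.Ph_inner _ hζ, ContinuousLinearMap.adjoint_inner_left]
    have hX : S.Xh₁ x = S.X₁ ω := by
      rw [hxdef]
      simp only [SandScheme.Mcl, ContinuousLinearEquiv.coe_coe]
      exact (S.X₁_sand ω).symm
    have hXζ : S.Xh₁ ζ = S.X₁ ω' := by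
      rw [← hζω']
      simp only [SandScheme.Mcl, ContinuousLinearEquiv.coe_coe]
      exact (S.X₁_sand ω').symm
    have hgerm : (inner ℂ (S.toBSScheme.germ ω) ω' : ℂ)
        = inner ℂ (S.Pstar (S.X₁ ω)) (S.X₁ ω') := by
      simp only [BSScheme.germ, ContinuousLinearMap.comp_apply, S.P_fix ω hω]
      rw [S.P_inner _ hω', ContinuousLinearMap.adjoint_inner_left]
    have hγ : (inner ℂ (S.toBSScheme.germ ω) ω' : ℂ) = (SD.γ j : ℂ) * inner ℂ ω ω' := by
      rw [show S.toBSScheme.germ ω = ((SD.γ j : ℝ) : ℂ) • ω from SD.germ_eig j]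
      rw [inner_smul_left, Complex.conj_ofReal]
    have hR : (inner ℂ (S.Ph ((ContinuousLinearMap.adjoint S.Minv) (S.Minv x))) ζ : ℂ)
        = inner ℂ ω ω' := by
      rw [S.Ph_inner _ hζ, ContinuousLinearMap.adjoint_inner_left]
      have h1 : S.Minv x = ω := by
        rw [hxdef]
        simp only [SandScheme.Mcl, SandScheme.Minv, ContinuousLinearEquiv.coe_coe]
        exact S.Mm.symm_apply_apply ω
      have h2 : S.Minv ζ = ω' := by
        simp only [SandScheme.Minv, ContinuousLinearEquiv.coe_coe, hω'def]
      rw [h1, h2]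
    rw [inner_sub_left, inner_smul_left, Complex.conj_ofReal, hL, hX, hXζ, hR,
      ← hgerm, hγ, sub_self]
  have hwker : S.germHat x - (SD.γ j : ℂ) • S.Ph
      ((ContinuousLinearMap.adjoint S.Minv) (S.Minv x)) ∈ S.kerHat := by
    apply Submodule.sub_mem
    · simp only [SandScheme.germHat, ContinuousLinearMap.comp_apply]
      exact S.Ph_mem _
    · exact Submodule.smul_mem _ _ (S.Ph_mem _)
  have hzero := claim _ hwker
  rw [inner_self_eq_zero] at hzero
  exact sub_eq_zero.mp hzero

lemma Minv_eq (u : S.Hh) : S.Minv u = S.Mm.symm u := rfl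

lemma B_eigen (SD : SpecData S.toBSScheme) (j : Fin S.n) :
    (S.M₀ ∘L S.germHat ∘L S.M₀) (S.M₀inv (S.Mcl (SD.ω j)))
      = ((SD.γ j : ℝ) : ℂ) • S.M₀inv (S.Mcl (SD.ω j)) := by
  set ω := SD.ω j with hωdef
  have hω : ω ∈ S.ker := SD.ω_mem j
  set x := S.Mcl ω with hxdef
  have hx : x ∈ S.kerHat := S.mcl_mem_kerHat hω
  have hPhx : S.Ph x = x := S.Ph_fix x hx
  set η := S.M₀inv x with hηdef
  have hcomm : ∀ u, S.M₀inv (S.Ph u) = S.Ph (S.M₀inv u) := by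
    intro u
    have := DFunLike.congr_fun S.M₀inv_comm u
    simpa using this
  have hPhη : S.Ph η = η := by
    rw [hηdef, ← hPhx, hcomm, S.Ph_idem, ← hcomm, hPhx]
  have hM₀η : S.M₀ η = x := by
    rw [hηdef, ← hPhx, S.M₀_inv_left, hPhx]
  set ξ := S.M₀inv η with hξdef
  have hPhξ : S.Ph ξ = ξ := by
    rw [hξdef, ← hPhη, hcomm, S.Ph_idem, ← hcomm, hPhη]
  have hM₀ξ : S.M₀ ξ = η := by
    rw [hξdef, ← hPhη, S.M₀_inv_left, hPhη]
  have hxξ : x = S.M₀ (S.M₀ ξ) := by rw [hM₀ξ, hM₀η]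
  have hQ : S.Ph ((ContinuousLinearMap.adjoint S.Minv) (S.Minv x)) = ξ := by
    conv_lhs => rw [hxξ]
    have h := S.M₀_sq ξ
    rw [hPhξ] at h
    exact h
  calc (S.M₀ ∘L S.germHat ∘L S.M₀) η = S.M₀ (S.germHat x) := by
        rw [ContinuousLinearMap.comp_apply, ContinuousLinearMap.comp_apply, hM₀η]
    _ = S.M₀ (((SD.γ j : ℝ) : ℂ) • S.Ph ((ContinuousLinearMap.adjoint S.Minv) (S.Minv x))) := by
        rw [S.germHat_eigen SD j]
    _ = ((SD.γ j : ℝ) : ℂ) • S.M₀ ξ := by rw [map_smul, hQ]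
    _ = ((SD.γ j : ℝ) : ℂ) • η := by rw [hM₀ξ]

end SandScheme

lemma aux_factor (t s : ℝ) (ht : 0 < t) :
    t ^ s / (t ^ 2 + t ^ 2) ^ (s / 2) = ((2:ℝ) ^ (s / 2))⁻¹ := by
  have h1 : t ^ 2 + t ^ 2 = 2 * t ^ 2 := by ring
  have h2 : ((2:ℝ) * t ^ 2) ^ (s / 2) = (2:ℝ) ^ (s/2) * (t ^ 2) ^ (s/2) :=
    Real.mul_rpow (by norm_num) (by positivity)
  have h3 : ((t:ℝ) ^ 2) ^ (s/2) = t ^ s := by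
    rw [← Real.rpow_natCast t 2, ← Real.rpow_mul ht.le]
    push_cast
    rw [show (2:ℝ) * (s / 2) = s by ring]
  rw [h1, h2, h3, mul_comm, ← div_div, div_self (Real.rpow_pos_of_pos ht s).ne', one_div]

lemma aux_phase (νj c₅ lam γ t : ℝ) (hνj : νj ≠ 0) (hc₅ : 0 ≤ c₅) (ht : 0 < t)
    (hr : |lam - (γ * t ^ 2 + νj * t ^ 4)| ≤ c₅ * t ^ 5)
    (htν : t ≤ |νj| / (2 * c₅ + 1)) :
    Real.cos (lam * (Real.pi / (|νj| * t ^ 2) / t ^ 2) - Real.pi / (|νj| * t ^ 2) * γ) ≤ 0 := by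
  have hνa : 0 < |νj| := abs_pos.mpr hνj
  have hden1 : (0:ℝ) < 2 * c₅ + 1 := by linarith
  set θ : ℝ := Real.pi / (|νj| * t ^ 2) / t ^ 2 with hθdef
  have hθval : θ = Real.pi / (|νj| * t ^ 4) := by
    rw [hθdef, div_div]
    congr 1
    ring
  have hθpos : 0 < θ := by rw [hθval]; positivity
  have hτθ : Real.pi / (|νj| * t ^ 2) = θ * t ^ 2 := by
    rw [hθval]
    field_simp
  set a : ℝ := lam * θ - Real.pi / (|νj| * t ^ 2) * γ with hadef
  set σ : ℝ := νj / |νj| with hσdef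
  have hσ : |σ| = 1 := by rw [hσdef, abs_div, abs_abs, div_self hνa.ne']
  have hπσ : Real.pi * σ = θ * (νj * t ^ 4) := by
    rw [hσdef, hθval]
    field_simp
  have hsplit : a - Real.pi * σ = θ * (lam - (γ * t ^ 2 + νj * t ^ 4)) := by
    rw [hπσ, hadef, hτθ]
    ring
  have herr : |a - Real.pi * σ| ≤ Real.pi / 2 := by
    rw [hsplit, abs_mul, abs_of_pos hθpos]
    have h1 : θ * |lam - (γ * t ^ 2 + νj * t ^ 4)| ≤ θ * (c₅ * t ^ 5) :=
      mul_le_mul_of_nonneg_left hr hθpos.le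
    have h2 : θ * (c₅ * t ^ 5) = Real.pi * c₅ * t / |νj| := by
      rw [hθval]
      field_simp
    have h4 : (2 * c₅ + 1) * t ≤ |νj| := by
      rw [le_div_iff₀ hden1] at htν
      linarith [htν]
    have h3 : Real.pi * c₅ * t / |νj| ≤ Real.pi / 2 := by
      rw [div_le_div_iff₀ hνa two_pos]
      nlinarith [Real.pi_pos, hc₅, ht]
    linarith
  have habs1 : Real.pi / 2 ≤ |a| := by
    have h := abs_sub_abs_le_abs_sub (Real.pi * σ) a
    rw [abs_mul, hσ, abs_of_pos Real.pi_pos, mul_one, abs_sub_comm (Real.pi * σ) a] at h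
    linarith
  have habs2 : |a| ≤ Real.pi + Real.pi / 2 := by
    have h := abs_sub_abs_le_abs_sub a (Real.pi * σ)
    rw [abs_mul, hσ, abs_of_pos Real.pi_pos, mul_one] at h
    linarith
  rw [← Real.cos_abs]
  exact Real.cos_nonpos_of_pi_div_two_le_of_le habs1 habs2

lemma aux_abs_exp_sub_s8 (lam θ τ γ : ℝ)
    (hcos : Real.cos (lam * θ - τ * γ) ≤ 0) :
    1 ≤ ‖Complex.exp (-(Complex.I * lam * θ))
      - Complex.exp (-Complex.I * (τ:ℂ) * (γ:ℂ))‖ := by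
  set X : ℂ := -(Complex.I * lam * θ) with hX
  set Y : ℂ := -Complex.I * (τ:ℂ) * (γ:ℂ) with hY
  have hXY : X - Y = ((τ * γ - lam * θ : ℝ) : ℂ) * Complex.I := by
    rw [hX, hY]
    push_cast
    ring
  have hYre : Y.re = 0 := by simp [hY]
  have hfac : Complex.exp X - Complex.exp Y = Complex.exp Y * (Complex.exp (X - Y) - 1) := by
    rw [mul_sub, ← Complex.exp_add, mul_one]
    congr 1
    ring
  have habsY : ‖Complex.exp Y‖ = 1 := by
    rw [Complex.norm_exp, hYre, Real.exp_zero]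
  have hre : (Complex.exp (X - Y)).re = Real.cos (lam * θ - τ * γ) := by
    rw [hXY, Complex.exp_ofReal_mul_I_re,
      show τ * γ - lam * θ = -(lam * θ - τ * γ) by ring, Real.cos_neg]
  have h1 : 1 ≤ ‖Complex.exp (X - Y) - 1‖ := by
    have h2 : |(Complex.exp (X - Y) - 1).re| ≤ ‖Complex.exp (X - Y) - 1‖ :=
      Complex.abs_re_le_norm _
    have h3 : (Complex.exp (X - Y) - 1).re = Real.cos (lam * θ - τ * γ) - 1 := by
      rw [Complex.sub_re, hre, Complex.one_re]
    rw [h3, abs_of_nonpos (by linarith [Real.cos_le_one (lam * θ - τ * γ)])] at h2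
    linarith
  rw [hfac, norm_mul, habsY, one_mul]
  exact h1

lemma aux_final (d b m q e t : ℝ) (hb : 0 < b) (h1 : 1 ≤ q * b) (ht : 0 < t)
    (hm : 0 ≤ m) (hq : 0 ≤ q) (he : 0 ≤ e) (hd : 0 ≤ d)
    (h2 : b - 2 * (m * (e * t)) ≤ d * b) (h3 : (4 * m * e * q + 1) * t ≤ 1) :
    1 / 2 ≤ d := by
  nlinarith [mul_le_mul_of_nonneg_left h2 hq, mul_pos hb ht, mul_nonneg (mul_nonneg hm he) ht.le,
    mul_nonneg hq hb.le]

/-- Assume the nondegeneracy condition `A(t) ≥ c⁎ t² I` for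
`|t| ≤ t⁰`. Suppose `N̂_{0,Q} = 0` and `𝒩̂_Q^{(q)} ≠ 0` for some `q`, i.e. in the
eigenvalue expansions `λ_l(t) = γ_l t² + μ_l t³ + ν_l t⁴ + …` one has `μ_l = 0`
for all `l` while `ν_j ≠ 0` for some `j`. Let `s ≥ 2`. Then there is no positive
function `C(τ)` with `lim_{τ→∞} C(τ)/|τ|^{1/2} = 0` such that
`‖M e^{-iτε⁻²A(t)} M⁻¹ P̂ − M₀ e^{-iτε⁻²t² M₀ Ŝ M₀} M₀⁻¹ P̂‖ εˢ(t²+ε²)^{-s/2}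
  ≤ C(τ) ε` for all `τ ∈ ℝ` and all sufficiently small `|t|` and `ε > 0`. -/
theorem sandwiched_exp_time_sharp_enhanced (S : SandScheme) (SD : SpecData S.toBSScheme)
    (cstar : ℝ) (hcstar : 0 < cstar)
    (hnondeg : ∀ t : ℝ, |t| ≤ S.t0 → ∀ u : (S.A t).domain,
      cstar * t ^ 2 * ‖(u : S.H)‖ ^ 2 ≤ (inner ℂ ((S.A t) u) (u : S.H) : ℂ).re)
    (hN0Q : S.NhatQ0 SD = 0)
    (hμ : ∀ l, SD.μ l = 0) (hν : ∃ j, SD.ν j ≠ 0)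
    (s : ℝ) (hs : 2 ≤ s) :
    ¬ ∃ C : ℝ → ℝ, (∀ τ, 0 < C τ) ∧
        Filter.Tendsto (fun τ : ℝ => C τ / Real.sqrt |τ|) Filter.atTop (nhds 0) ∧
        ∃ t₁ > (0 : ℝ), ∃ ε₁ > (0 : ℝ), ∀ τ t ε : ℝ,
          |t| ≤ t₁ → 0 < ε → ε ≤ ε₁ →
          ‖(S.Mcl ∘L S.E t (τ / ε ^ 2) ∘L S.Minv
              - S.M₀ ∘L NormedSpace.exp
                  (((-Complex.I) * ((τ / ε ^ 2 * t ^ 2 : ℝ) : ℂ))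
                    • (S.M₀ ∘L S.germHat ∘L S.M₀)) ∘L S.M₀inv)
              ∘L S.Ph‖ * (ε ^ s / (t ^ 2 + ε ^ 2) ^ (s / 2)) ≤ C τ * ε := by
  rintro ⟨C, hCpos, hClim, t₁, ht₁, ε₁, hε₁, hbound⟩
  obtain ⟨j, hνj⟩ := hν
  obtain ⟨c0, hc0⟩ := SD.φ_expansion
  obtain ⟨c5, hc5⟩ := SD.lam_expansion
  set cφ : ℝ := max c0 0 with hcφdef
  have hcφ0 : 0 ≤ cφ := le_max_right _ _
  set c₅ : ℝ := max c5 0 with hc₅def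
  have hc₅0 : 0 ≤ c₅ := le_max_right _ _
  set νa : ℝ := |SD.ν j| with hνadef
  have hνa : 0 < νa := abs_pos.mpr hνj
  set KM : ℝ := ‖S.Mcl‖ with hKMdef
  set KMi : ℝ := ‖S.Minv‖ with hKMidef
  have hKM0 : 0 ≤ KM := norm_nonneg _
  have hKMi0 : 0 ≤ KMi := norm_nonneg _
  have hπν : 0 < Real.pi / νa := div_pos Real.pi_pos hνa
  have hKinv : (0:ℝ) < ((2:ℝ) ^ (s / 2))⁻¹ := by positivity
  set κ : ℝ := ((2:ℝ) ^ (s / 2))⁻¹ / 2 / Real.sqrt (Real.pi / νa) with hκdef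
  have hκ : 0 < κ := div_pos (by positivity) (Real.sqrt_pos.mpr hπν)
  obtain ⟨T, hT⟩ := Filter.eventually_atTop.mp (hClim.eventually_lt_const hκ)
  -- choice of t
  have hden1 : (0:ℝ) < 2 * c₅ + 1 := by linarith
  have hden2 : (0:ℝ) < 4 * KM * cφ * KMi + 1 := by positivity
  have hmaxT : (0:ℝ) < max T 1 := lt_of_lt_of_le one_pos (le_max_right _ _)
  obtain ⟨t, ht, ht_t₁, ht_ε₁, ht_ts, ht_ν, ht_KM, ht_T⟩ :
      ∃ t : ℝ, 0 < t ∧ t ≤ t₁ ∧ t ≤ ε₁ ∧ t ≤ SD.tstar ∧ t ≤ νa / (2 * c₅ + 1) ∧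
        t ≤ 1 / (4 * KM * cφ * KMi + 1) ∧ t ≤ Real.sqrt (Real.pi / (νa * max T 1)) := by
    refine ⟨min t₁ (min ε₁ (min SD.tstar (min (νa / (2 * c₅ + 1))
      (min (1 / (4 * KM * cφ * KMi + 1)) (Real.sqrt (Real.pi / (νa * max T 1))))))),
      ?_, min_le_left _ _, (min_le_right _ _).trans (min_le_left _ _),
      ((min_le_right _ _).trans (min_le_right _ _)).trans (min_le_left _ _),
      (((min_le_right _ _).trans (min_le_right _ _)).trans (min_le_right _ _)).trans
        (min_le_left _ _),
      ((((min_le_right _ _).trans (min_le_right _ _)).trans (min_le_right _ _)).trans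
        (min_le_right _ _)).trans (min_le_left _ _),
      ((((min_le_right _ _).trans (min_le_right _ _)).trans (min_le_right _ _)).trans
        (min_le_right _ _)).trans (min_le_right _ _)⟩
    apply lt_min ht₁
    apply lt_min hε₁
    apply lt_min SD.tstar_pos
    apply lt_min (div_pos hνa hden1)
    apply lt_min (by positivity)
    exact Real.sqrt_pos.mpr (div_pos Real.pi_pos (mul_pos hνa hmaxT))
  have habs_t : |t| = t := abs_of_pos ht
  have htst : |t| ≤ SD.tstar := by rw [habs_t]; exact ht_ts
  have ht2 : (0:ℝ) < t ^ 2 := by positivity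
  -- τ
  obtain ⟨τ, hτeq, hτpos, hτT⟩ :
      ∃ τ : ℝ, τ = Real.pi / (νa * t ^ 2) ∧ 0 < τ ∧ T ≤ τ := by
    refine ⟨Real.pi / (νa * t ^ 2), rfl, div_pos Real.pi_pos (by positivity), ?_⟩
    have h1 : t ^ 2 ≤ Real.pi / (νa * max T 1) := by
      have hss := Real.sq_sqrt (le_of_lt (div_pos Real.pi_pos (mul_pos hνa hmaxT)))
      calc t ^ 2 ≤ Real.sqrt (Real.pi / (νa * max T 1)) ^ 2 :=
            pow_le_pow_left₀ ht.le ht_T 2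
        _ = Real.pi / (νa * max T 1) := hss
    have h2 : max T 1 ≤ Real.pi / (νa * t ^ 2) := by
      rw [le_div_iff₀ (by positivity)]
      rw [le_div_iff₀ (by positivity)] at h1
      calc max T 1 * (νa * t ^ 2) = t ^ 2 * (νa * max T 1) := by ring
        _ ≤ Real.pi := h1
    exact (le_max_left T 1).trans h2
  -- spectral data at t
  obtain ⟨hd, heig⟩ := SD.φ_eig j t htst
  -- specialize the bound, with ε = t
  have hb := hbound τ t t (by rw [habs_t]; exact ht_t₁) ht ht_ε₁
  have hττ : τ / t ^ 2 * t ^ 2 = τ := div_mul_cancel₀ τ ht2.ne'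
  rw [hττ, aux_factor t s ht] at hb
  -- names
  set θ : ℝ := τ / t ^ 2 with hθdef
  set φv : S.H := SD.φ j t with hφdef
  set lam : ℝ := SD.lam j t with hlamdef
  set ωv : S.H := SD.ω j with hωdef
  set γv : ℝ := SD.γ j with hγdef
  set B : S.Hh →L[ℂ] S.Hh := S.M₀ ∘L S.germHat ∘L S.M₀ with hBdef
  set x : S.Hh := S.Mcl ωv with hxdef
  set η : S.Hh := S.M₀inv x with hηdef
  set X : ℂ := -(Complex.I * (lam:ℂ) * (θ:ℂ)) with hXdef
  set Y : ℂ := -Complex.I * (τ:ℂ) * (γv:ℂ) with hYdef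
  set D : S.Hh →L[ℂ] S.Hh :=
    (S.Mcl ∘L S.E t θ ∘L S.Minv
      - S.M₀ ∘L NormedSpace.exp ((-Complex.I * (τ:ℂ)) • B) ∘L S.M₀inv) ∘L S.Ph with hDdef
  -- basic identities
  have hωmem : ωv ∈ S.ker := SD.ω_mem j
  have hPhx : S.Ph x = x := S.Ph_fix x (S.mcl_mem_kerHat hωmem)
  have hMinvx : S.Minv x = ωv := by
    rw [hxdef]
    simp only [SandScheme.Minv, SandScheme.Mcl, ContinuousLinearEquiv.coe_coe]
    exact S.Mm.symm_apply_apply ωv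
  have hM₀η : S.M₀ η = x := by rw [hηdef, ← hPhx, S.M₀_inv_left, hPhx]
  -- evolution of the eigenvector
  have hE : S.E t θ φv = Complex.exp X • φv := S.toBSScheme.E_eigen t θ lam φv hd heig
  have hEω : S.E t θ ωv = Complex.exp X • φv - S.E t θ (φv - ωv) := by
    conv_lhs => rw [show ωv = φv - (φv - ωv) by abel]
    rw [map_sub, hE]
  -- exponential of the sandwiched germ on the eigenvector
  have hBeig : B η = ((γv : ℝ) : ℂ) • η := S.B_eigen SD j
  have hzB : ((-Complex.I * (τ:ℂ)) • B) η = (-Complex.I * (τ:ℂ) * (γv:ℂ)) • η := by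
    rw [ContinuousLinearMap.smul_apply, hBeig, smul_smul]
  have hexpB : NormedSpace.exp ((-Complex.I * (τ:ℂ)) • B) η = Complex.exp Y • η :=
    exp_apply_eigen _ _ _ hzB
  -- apply D to x
  have hMclφ : S.Mcl φv = x + S.Mcl (φv - ωv) := by rw [map_sub, hxdef]; abel
  have hDx : D x = (Complex.exp X - Complex.exp Y) • x
      + (Complex.exp X • S.Mcl (φv - ωv) - S.Mcl (S.E t θ (φv - ωv))) := by
    rw [hDdef]
    simp only [ContinuousLinearMap.comp_apply, ContinuousLinearMap.sub_apply, hPhx, hMinvx]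
    rw [← hηdef, hexpB, map_smul, hM₀η, hEω, map_sub, map_smul, hMclφ]
    rw [sub_smul, smul_add]
    abel
  -- norm estimates
  have hφω : ‖φv - ωv‖ ≤ cφ * t := by
    have h := hc0 j t htst
    rw [habs_t] at h
    exact h.trans (mul_le_mul_of_nonneg_right (le_max_left _ _) ht.le)
  have haxX : ‖Complex.exp X‖ = 1 := by
    have hXre : X.re = 0 := by simp [hXdef]
    rw [Complex.norm_exp, hXre, Real.exp_zero]
  have hub : ‖Complex.exp X • S.Mcl (φv - ωv) - S.Mcl (S.E t θ (φv - ωv))‖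
      ≤ 2 * (KM * (cφ * t)) := by
    have h1 : ‖Complex.exp X • S.Mcl (φv - ωv)‖ ≤ KM * (cφ * t) := by
      rw [norm_smul, haxX, one_mul]
      exact (S.Mcl.le_opNorm _).trans (mul_le_mul_of_nonneg_left hφω hKM0)
    have h2 : ‖S.Mcl (S.E t θ (φv - ωv))‖ ≤ KM * (cφ * t) := by
      refine (S.Mcl.le_opNorm _).trans ?_
      rw [S.E_isometry]
      exact mul_le_mul_of_nonneg_left hφω hKM0
    calc ‖Complex.exp X • S.Mcl (φv - ωv) - S.Mcl (S.E t θ (φv - ωv))‖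
        ≤ ‖Complex.exp X • S.Mcl (φv - ωv)‖ + ‖S.Mcl (S.E t θ (φv - ωv))‖ := norm_sub_le _ _
      _ ≤ 2 * (KM * (cφ * t)) := by linarith
  -- the phase lower bound
  have hr : |lam - (γv * t ^ 2 + SD.ν j * t ^ 4)| ≤ c₅ * t ^ 5 := by
    have h := hc5 j t htst
    rw [hμ j, habs_t] at h
    calc |lam - (γv * t ^ 2 + SD.ν j * t ^ 4)|
        = |lam - (γv * t ^ 2 + 0 * t ^ 3 + SD.ν j * t ^ 4)| := by ring_nf
      _ ≤ c5 * t ^ 5 := h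
      _ ≤ c₅ * t ^ 5 := mul_le_mul_of_nonneg_right (le_max_left _ _) (by positivity)
  have hcosa : Real.cos (lam * θ - τ * γv) ≤ 0 := by
    rw [hθdef, hτeq, hνadef]
    rw [hνadef] at ht_ν
    exact aux_phase (SD.ν j) c₅ lam γv t hνj hc₅0 ht hr ht_ν
  have hphase : 1 ≤ ‖Complex.exp X - Complex.exp Y‖ := by
    rw [hXdef, hYdef]
    exact aux_abs_exp_sub_s8 lam θ τ γv hcosa
  -- lower bound for ‖D x‖
  have hlow : ‖x‖ - 2 * (KM * (cφ * t)) ≤ ‖D x‖ := by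
    rw [hDx]
    have h3 := norm_sub_norm_le ((Complex.exp X - Complex.exp Y) • x)
      (-(Complex.exp X • S.Mcl (φv - ωv) - S.Mcl (S.E t θ (φv - ωv))))
    rw [sub_neg_eq_add, norm_neg] at h3
    have h4 : ‖x‖ ≤ ‖(Complex.exp X - Complex.exp Y) • x‖ := by
      rw [norm_smul]
      exact le_mul_of_one_le_left (norm_nonneg x) hphase
    linarith
  -- operator norm lower bound
  have hω1 : ‖ωv‖ = 1 := SD.ω_orthonormal.1 j
  have h1x : 1 ≤ KMi * ‖x‖ := by
    calc (1:ℝ) = ‖ωv‖ := hω1.symm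
      _ = ‖S.Minv x‖ := by rw [hMinvx]
      _ ≤ KMi * ‖x‖ := S.Minv.le_opNorm x
  have hxn : 0 < ‖x‖ := by
    by_contra hcon
    push_neg at hcon
    have hx0 : ‖x‖ = 0 := le_antisymm hcon (norm_nonneg x)
    rw [hx0, mul_zero] at h1x
    linarith
  have hsmall : (4 * KM * cφ * KMi + 1) * t ≤ 1 := by
    rw [le_div_iff₀ hden2] at ht_KM
    linarith
  have hop : ‖D x‖ ≤ ‖D‖ * ‖x‖ := D.le_opNorm x
  have hD12 : 1 / 2 ≤ ‖D‖ :=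
    aux_final ‖D‖ ‖x‖ KM KMi cφ t hxn h1x ht hKM0 hKMi0 hcφ0 (norm_nonneg D)
      (hlow.trans hop) hsmall
  -- conclusion
  have hchain : 1 / 2 * ((2:ℝ) ^ (s / 2))⁻¹ ≤ C τ * t :=
    le_trans (mul_le_mul_of_nonneg_right hD12 hKinv.le) hb
  have hsq : Real.sqrt |τ| = Real.sqrt (Real.pi / νa) / t := by
    rw [abs_of_pos hτpos, hτeq, show Real.pi / (νa * t ^ 2) = (Real.pi / νa) / t ^ 2 from
      by rw [div_div], Real.sqrt_div hπν.le, Real.sqrt_sq ht.le]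
  have hsqpos : 0 < Real.sqrt (Real.pi / νa) := Real.sqrt_pos.mpr hπν
  have hCb := hT τ hτT
  have h5 : C τ < κ * (Real.sqrt (Real.pi / νa) / t) := by
    rw [← hsq]
    rw [div_lt_iff₀ (by rw [hsq]; positivity)] at hCb
    linarith [hCb]
  have h6 : C τ * t < κ * Real.sqrt (Real.pi / νa) := by
    calc C τ * t < κ * (Real.sqrt (Real.pi / νa) / t) * t :=
          mul_lt_mul_of_pos_right h5 ht
      _ = κ * Real.sqrt (Real.pi / νa) := by field_simp
  have h7 : κ * Real.sqrt (Real.pi / νa) = 1 / 2 * ((2:ℝ) ^ (s / 2))⁻¹ := by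
    rw [hκdef, div_mul_cancel₀ _ hsqpos.ne']
    ring
  rw [h7] at h6
  linarith
end
end
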